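/- arXiv:1310.4543 — 9 statements merged into one kernel-verified Lean document; each statement's English description precedes it below -/
import Mathlib

section
/- Let μ : ℝ → 𝔤* be a differentiable curve satisfying the energy-dissipative Lie–Poisson equation d/dt μ(t) + ad*_{δh/δμ} μ(t) = − θ ad*_{δC/δμ} ([δC/δμ, δh/δμ])^♭ (functional derivatives and ♭ evaluated at μ(t)), where C is a Casimir, i.e. ad*_{δC/δμ} μ = 0 for every μ ∈ 𝔤*. Then the Casimir is exactly preserved: the function t ↦ C(μ(t)) is constant on ℝ. -/
/-- For a curve `μ` solving the energy-dissipative Lie–Poisson equation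
`dμ/dt + ad*_{δh/δμ} μ = − θ ad*_{δC/δμ} ([δC/δμ, δh/δμ])^♭`, where `C` is a Casimir
(`ad*_{δC/δμ} μ = 0` for every `μ`), the Casimir is exactly preserved:
`t ↦ C(μ(t))` is constant on `ℝ`. -/
theorem statement4
    {G : Type*} [NormedAddCommGroup G] [NormedSpace ℝ G]
    [LieRing G] [LieAlgebra ℝ G] [FiniteDimensional ℝ G]
    (θ : ℝ)
    (γ : (@ContinuousLinearMap ℝ ℝ _ _ (RingHom.id ℝ) G _ NormedAddCommGroup.toAddCommGroup.toAddCommMonoid ℝ _ _ NormedSpace.toModule _) → @LinearMap ℝ ℝ _ _ (RingHom.id ℝ) G (@LinearMap ℝ ℝ _ _ (RingHom.id ℝ) G ℝ NormedAddCommGroup.toAddCommGroup.toAddCommMonoid _ NormedSpace.toModule _) NormedAddCommGroup.toAddCommGroup.toAddCommMonoid _ NormedSpace.toModule _)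
    (h C : (@ContinuousLinearMap ℝ ℝ _ _ (RingHom.id ℝ) G _ NormedAddCommGroup.toAddCommGroup.toAddCommMonoid ℝ _ _ NormedSpace.toModule _) → ℝ) (dh dC : (@ContinuousLinearMap ℝ ℝ _ _ (RingHom.id ℝ) G _ NormedAddCommGroup.toAddCommGroup.toAddCommMonoid ℝ _ _ NormedSpace.toModule _) → G)
    (hdh : ∀ μ : @ContinuousLinearMap ℝ ℝ _ _ (RingHom.id ℝ) G _ NormedAddCommGroup.toAddCommGroup.toAddCommMonoid ℝ _ _ NormedSpace.toModule _, HasFDerivAt h (ContinuousLinearMap.apply ℝ ℝ (dh μ)) μ)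
    (hdC : ∀ μ : @ContinuousLinearMap ℝ ℝ _ _ (RingHom.id ℝ) G _ NormedAddCommGroup.toAddCommGroup.toAddCommMonoid ℝ _ _ NormedSpace.toModule _, HasFDerivAt C (ContinuousLinearMap.apply ℝ ℝ (dC μ)) μ)
    (hCasimir : ∀ (ν : @ContinuousLinearMap ℝ ℝ _ _ (RingHom.id ℝ) G _ NormedAddCommGroup.toAddCommGroup.toAddCommMonoid ℝ _ _ NormedSpace.toModule _) (η : G), ν ⁅dC ν, η⁆ = 0)
    (μ : ℝ → @ContinuousLinearMap ℝ ℝ _ _ (RingHom.id ℝ) G _ NormedAddCommGroup.toAddCommGroup.toAddCommMonoid ℝ _ _ NormedSpace.toModule _) (μ' : ℝ → @ContinuousLinearMap ℝ ℝ _ _ (RingHom.id ℝ) G _ NormedAddCommGroup.toAddCommGroup.toAddCommMonoid ℝ _ _ NormedSpace.toModule _)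
    (hμ : ∀ t : ℝ, HasDerivAt μ (μ' t) t)
    (heq : ∀ (t : ℝ) (η : G),
      μ' t η + μ t ⁅dh (μ t), η⁆ =
        -(θ * γ (μ t) ⁅dC (μ t), dh (μ t)⁆ ⁅dC (μ t), η⁆)) :
    ∀ s t : ℝ, C (μ s) = C (μ t) := by
  have key : ∀ t : ℝ, HasDerivAt (fun t => C (μ t)) 0 t := by
    intro t
    have h1 := (hdC (μ t)).comp_hasDerivAt t (hμ t)
    have h2 : μ' t (dC (μ t)) = 0 := by
      have hA := heq t (dC (μ t))
      have hB := heq t ⁅dC (μ t), dC (μ t)⁆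
      have hμz : μ t ⁅dC (μ t), dC (μ t)⁆ = 0 := hCasimir _ _
      have hμ'z : μ' t ⁅dC (μ t), dC (μ t)⁆ = 0 := by
        have h0 := hCasimir (μ' t) (dC (μ' t))
        rw [lie_self] at h0 ⊢
        exact h0
      have hc : μ t ⁅dh (μ t), dC (μ t)⁆ = 0 := by
        letI addG : AddCommGroup G := LieRing.toAddCommGroup
        have h3 := hCasimir (μ t) (-dh (μ t))
        rwa [lie_neg, lie_skew] at h3
      simp only [lie_self, lie_zero] at hA hB hμz hμ'z
      rw [hc] at hA
      rw [hμz, hμ'z] at hB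
      linarith
    simp [h2] at h1
    exact h1
  intro s t
  have mono : ∀ a b : ℝ, a ≤ b → C (μ a) = C (μ b) := by
    intro a b hab
    have := constant_of_has_deriv_right_zero (f := fun t => C (μ t)) (a := a) (b := b)
      (fun x _ => (key x).continuousAt.continuousWithinAt)
      (fun x _ => (key x).hasDerivWithinAt) b (Set.right_mem_Icc.mpr hab)
    exact this.symm
  rcases le_total s t with hst | hst
  · exact mono s t hst
  · exact (mono t s hst).symm
end

section
/- Let Π, Γ, χ ∈ ℝ³, let 𝕀 be a symmetric positive-definite real 3×3 matrix, set Ω := 𝕀⁻¹Π, and let α ∈ ℝ (the weight mg). Assume Π·Γ ≠ 0. For the heavy top Hamiltonian h(Π, Γ) = ½ Π·𝕀⁻¹Π + α χ·Γ (so δh/δΠ = Ω and δh/δΓ = αχ) and the Casimir C(Π, Γ) = (Π·Γ)² (so δC/δΠ = 2(Π·Γ)Γ and δC/δΓ = 2(Π·Γ)Π), the selective-decay asymptotic conditions (δh/δΠ) × (δC/δΠ) = 0 and (δh/δΓ) × (δC/δΠ) − (δC/δΓ) × (δh/δΠ) = 0, i.e. Ω × (2(Π·Γ)Γ) = 0 and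 (αχ) × (2(Π·Γ)Γ) − (2(Π·Γ)Π) × Ω = 0, hold if and only if (Π, Γ) is an equilibrium of the heavy top equations, i.e. Π × Ω + α (Γ × χ) = 0 and Γ × Ω = 0. -/
open Matrix

/-- Heavy top: with Hamiltonian `h(Π, Γ) = ½ Π·𝕀⁻¹Π + α χ·Γ` and Casimir
`C(Π, Γ) = (Π·Γ)²`, assuming `Π·Γ ≠ 0`, the selective-decay asymptotic conditions
`Ω × (2(Π·Γ)Γ) = 0` and `(αχ) × (2(Π·Γ)Γ) − (2(Π·Γ)Π) × Ω = 0` hold iff `(Π, Γ)` is an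
equilibrium of the heavy top equations: `Π × Ω + α (Γ × χ) = 0` and `Γ × Ω = 0`. -/
theorem statement9
    (P Γ χ : Fin 3 → ℝ) (I : Matrix (Fin 3) (Fin 3) ℝ)
    (hI : I.PosDef) (α : ℝ)
    (Ω : Fin 3 → ℝ) (hΩ : Ω = I⁻¹.mulVec P)
    (hne : P ⬝ᵥ Γ ≠ 0) :
    (Ω ⨯₃ ((2 * (P ⬝ᵥ Γ)) • Γ) = 0 ∧
        (α • χ) ⨯₃ ((2 * (P ⬝ᵥ Γ)) • Γ) - ((2 * (P ⬝ᵥ Γ)) • P) ⨯₃ Ω = 0) ↔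
      (P ⨯₃ Ω + α • (Γ ⨯₃ χ) = 0 ∧ Γ ⨯₃ Ω = 0) := by
  have hc : (2 * (P ⬝ᵥ Γ)) ≠ 0 := by
    simpa using hne
  have h1 : Ω ⨯₃ ((2 * (P ⬝ᵥ Γ)) • Γ) = (2 * (P ⬝ᵥ Γ)) • (Ω ⨯₃ Γ) := by
    simp [_root_.map_smul]
  have h2 : (α • χ) ⨯₃ ((2 * (P ⬝ᵥ Γ)) • Γ) - ((2 * (P ⬝ᵥ Γ)) • P) ⨯₃ Ω
      = (2 * (P ⬝ᵥ Γ)) • ((α • χ) ⨯₃ Γ - P ⨯₃ Ω) := by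
    simp [_root_.map_smul, LinearMap.smul_apply, smul_sub]
  constructor
  · rintro ⟨ha, hb⟩
    rw [h1, smul_eq_zero] at ha
    rw [h2, smul_eq_zero] at hb
    have ha' : Ω ⨯₃ Γ = 0 := ha.resolve_left hc
    have hb' : (α • χ) ⨯₃ Γ - P ⨯₃ Ω = 0 := hb.resolve_left hc
    constructor
    · have : α • (Γ ⨯₃ χ) = -((α • χ) ⨯₃ Γ) := by
        rw [cross_anticomm]; simp [_root_.map_smul]
      rw [this]
      have := sub_eq_zero.mp hb'
      rw [← this]; abel
    · rw [← cross_anticomm, ha', neg_zero]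
  · rintro ⟨ha, hb⟩
    have hΩΓ : Ω ⨯₃ Γ = 0 := by rw [← cross_anticomm, hb, neg_zero]
    constructor
    · rw [h1, hΩΓ, smul_zero]
    · rw [h2]
      have : (α • χ) ⨯₃ Γ = -(α • (Γ ⨯₃ χ)) := by
        rw [← cross_anticomm]; simp [_root_.map_smul]
      rw [this]
      have hPΩ : P ⨯₃ Ω = -(α • (Γ ⨯₃ χ)) := by
        rw [eq_neg_iff_add_eq_zero]; exact ha
      rw [hPΩ, sub_self, smul_zero]
end

section
/- Let Π : ℝ → ℝ³ be a differentiable curve, 𝕀 a symmetric positive-definite real 3×3 matrix, Ω(t) := 𝕀⁻¹Π(t), and θ ∈ ℝ. Suppose Π satisfies the Casimir-dissipative rigid body equation Π'(t) = Π(t) × Ω(t) + θ (Π(t) × Ω(t)) × Ω(t) for all t. Then for all t, the Casimir ½|Π|² decays at the rate (d/dt)(½ Π(t)·Π(t)) = − θ |Ω(t) × Π(t)|². -/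
open Matrix

/-- A solution `Π` of the Casimir-dissipative rigid body equation
`Π' = Π × Ω + θ (Π × Ω) × Ω`, with `Ω = 𝕀⁻¹Π`, dissipates the Casimir `½|Π|²` at the rate
`d/dt (½ Π·Π) = − θ |Ω × Π|²`. -/
theorem statement10
    (I : Matrix (Fin 3) (Fin 3) ℝ) (hI : I.PosDef) (θ : ℝ)
    (P : ℝ → Fin 3 → ℝ) (Ω : ℝ → Fin 3 → ℝ)
    (hΩ : ∀ t : ℝ, Ω t = I⁻¹.mulVec (P t))
    (hP : ∀ t : ℝ,
      HasDerivAt P ((P t ⨯₃ Ω t) + θ • ((P t ⨯₃ Ω t) ⨯₃ Ω t)) t) :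
    ∀ t : ℝ,
      HasDerivAt (fun s => (1 / 2) * (P s ⬝ᵥ P s))
        (-(θ * ((Ω t ⨯₃ P t) ⬝ᵥ (Ω t ⨯₃ P t)))) t := by
  intro t
  set v := (P t ⨯₃ Ω t) + θ • ((P t ⨯₃ Ω t) ⨯₃ Ω t) with hv
  have hcomp : ∀ i, HasDerivAt (fun s => P s i) (v i) t :=
    (hasDerivAt_pi.mp (hP t))
  have h : HasDerivAt (fun s => (1 / 2) * (P s ⬝ᵥ P s))
      (∑ i, P t i * v i) t := by
    have hsum : HasDerivAt (fun s => ∑ i, (1 / 2) * (P s i * P s i))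
        (∑ i, P t i * v i) t := by
      have : ∀ i ∈ Finset.univ, HasDerivAt (fun s => (1 / 2) * (P s i * P s i))
          (P t i * v i) t := by
        intro i _
        have := (((hcomp i).mul (hcomp i)).const_mul (1 / 2 : ℝ))
        rw [show P t i * v i = 1 / 2 * (v i * P t i + P t i * v i) by ring]
        exact this
      exact HasDerivAt.sum this
    have : (fun s => ∑ i, (1 / 2) * (P s i * P s i))
        = fun s => (1 / 2) * (P s ⬝ᵥ P s) := by
      funext s
      simp [dotProduct, Finset.mul_sum]
    rwa [this] at hsum
  convert h using 1
  simp only [hv, crossProduct, dotProduct, Fin.sum_univ_three, Pi.add_apply,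
    Pi.smul_apply, smul_eq_mul, LinearMap.mk₂_apply, cons_val_zero, cons_val_one,
    head_cons, cons_val_two, tail_cons]
  ring
end

section
/- Let Π : ℝ → ℝ³ be a differentiable curve, 𝕀 a symmetric positive-definite real 3×3 matrix, Ω(t) := 𝕀⁻¹Π(t), and θ ∈ ℝ. Suppose Π satisfies Π'(t) = Π(t) × Ω(t) + θ (𝕀 (Π(t) × Ω(t))) × Ω(t) for all t (the Casimir-dissipative rigid body equation for the inner product γ_𝕀 associated with the inertia tensor). Then for all t, (d/dt)(½ Π(t)·Π(t)) = − θ (𝕀 (Ω(t) × Π(t))) · (Ω(t) × Π(t)). -/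
open Matrix

notation:74 a:74 " ×₃ " b:75 => crossProduct a b

/-- A solution `Π` of the Casimir-dissipative rigid body equation for the
inner product `γ_𝕀` associated with the inertia tensor, `Π' = Π × Ω + θ (𝕀(Π × Ω)) × Ω`,
with `Ω = 𝕀⁻¹Π`, satisfies `d/dt (½ Π·Π) = − θ (𝕀(Ω × Π))·(Ω × Π)`. -/
theorem statement11
    (I : Matrix (Fin 3) (Fin 3) ℝ) (hI : I.PosDef) (θ : ℝ)
    (P : ℝ → Fin 3 → ℝ) (Ω : ℝ → Fin 3 → ℝ)
    (hΩ : ∀ t : ℝ, Ω t = I⁻¹.mulVec (P t))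
    (hP : ∀ t : ℝ,
      HasDerivAt P ((P t ×₃ Ω t) + θ • ((I.mulVec (P t ×₃ Ω t)) ×₃ Ω t)) t) :
    ∀ t : ℝ,
      HasDerivAt (fun s => (1 / 2) * (P s ⬝ᵥ P s))
        (-(θ * ((I.mulVec (Ω t ×₃ P t)) ⬝ᵥ (Ω t ×₃ P t)))) t := by
  intro t
  set v := (P t ×₃ Ω t) + θ • ((I.mulVec (P t ×₃ Ω t)) ×₃ Ω t) with hv
  have hcoord : ∀ i, HasDerivAt (fun s => P s i) (v i) t :=
    hasDerivAt_pi.mp (hP t)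
  have h1 : HasDerivAt (fun s => ∑ i, P s i * P s i)
      (∑ i : Fin 3, (v i * P t i + P t i * v i)) t :=
    HasDerivAt.fun_sum fun i _ => (hcoord i).mul (hcoord i)
  have h2 : HasDerivAt (fun s => (1 / 2) * (P s ⬝ᵥ P s))
      ((1 / 2) * ∑ i : Fin 3, (v i * P t i + P t i * v i)) t := by
    simpa only [dotProduct] using h1.const_mul (1 / 2 : ℝ)
  convert h2 using 1
  simp only [hv, cross_apply, mulVec, dotProduct, Fin.sum_univ_three,
    Pi.add_apply, Pi.smul_apply, smul_eq_mul, cons_val_zero, cons_val_one,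
    head_cons, cons_val_two, tail_cons]
  ring
end

section
/- Let Π : ℝ → ℝ³ be a differentiable curve, 𝕀 a symmetric positive-definite real 3×3 matrix, Ω(t) := 𝕀⁻¹Π(t), and θ ∈ ℝ. Suppose Π satisfies the Casimir-dissipative rigid body equation Π'(t) = Π(t) × Ω(t) + θ (Π(t) × Ω(t)) × Ω(t) for all t. Then the rigid body energy is exactly preserved: the function t ↦ ½ Π(t)·𝕀⁻¹Π(t) is constant on ℝ. -/
open Matrix

private lemma hasDerivAt_dot (f g : ℝ → Fin 3 → ℝ) (f' g' : Fin 3 → ℝ) (t : ℝ)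
    (hf : HasDerivAt f f' t) (hg : HasDerivAt g g' t) :
    HasDerivAt (fun t => f t ⬝ᵥ g t) (f' ⬝ᵥ g t + f t ⬝ᵥ g') t := by
  simp only [dotProduct]
  rw [← Finset.sum_add_distrib]
  exact HasDerivAt.fun_sum fun i _ =>
    ((hasDerivAt_pi.mp hf i).mul (hasDerivAt_pi.mp hg i))

private lemma hasDerivAt_mulVec (A : Matrix (Fin 3) (Fin 3) ℝ) (f : ℝ → Fin 3 → ℝ)
    (f' : Fin 3 → ℝ) (t : ℝ) (hf : HasDerivAt f f' t) :
    HasDerivAt (fun t => A.mulVec (f t)) (A.mulVec f') t := by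
  rw [hasDerivAt_pi]
  intro i
  simp only [Matrix.mulVec, dotProduct]
  exact HasDerivAt.fun_sum fun j _ => (hasDerivAt_pi.mp hf j).const_mul (A i j)

/-- A solution `Π` of the Casimir-dissipative rigid body equation
`Π' = Π × Ω + θ (Π × Ω) × Ω`, with `Ω = 𝕀⁻¹Π`, exactly preserves the rigid body energy:
`t ↦ ½ Π·𝕀⁻¹Π` is constant on `ℝ`. -/
theorem statement12
    (I : Matrix (Fin 3) (Fin 3) ℝ) (hI : I.PosDef) (θ : ℝ)
    (P : ℝ → Fin 3 → ℝ) (Ω : ℝ → Fin 3 → ℝ)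
    (hΩ : ∀ t : ℝ, Ω t = I⁻¹.mulVec (P t))
    (hP : ∀ t : ℝ,
      HasDerivAt P ((P t ⨯₃ Ω t) + θ • ((P t ⨯₃ Ω t) ⨯₃ Ω t)) t) :
    ∀ s t : ℝ,
      (1 / 2) * (P s ⬝ᵥ I⁻¹.mulVec (P s)) = (1 / 2) * (P t ⬝ᵥ I⁻¹.mulVec (P t)) := by
  set A := I⁻¹ with hA
  have hAsym : Aᵀ = A := by
    have h := (hI.isHermitian.inv)
    simpa [Matrix.IsHermitian, Matrix.conjTranspose_eq_transpose_of_trivial] using h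
  set D : ℝ → Fin 3 → ℝ := fun t => (P t ⨯₃ Ω t) + θ • ((P t ⨯₃ Ω t) ⨯₃ Ω t) with hD
  -- derivative of the energy is zero
  have key : ∀ t : ℝ, HasDerivAt (fun t => P t ⬝ᵥ A.mulVec (P t)) 0 t := by
    intro t
    have h1 := hasDerivAt_dot P (fun t => A.mulVec (P t)) (D t) (A.mulVec (D t)) t
      (hP t) (hasDerivAt_mulVec A P (D t) t (hP t))
    have hsymdot : P t ⬝ᵥ A.mulVec (D t) = D t ⬝ᵥ A.mulVec (P t) := by
      rw [Matrix.dotProduct_mulVec, ← Matrix.mulVec_transpose, hAsym,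
        dotProduct_comm]
    have hperp : ∀ v w : Fin 3 → ℝ, (v ⨯₃ w) ⬝ᵥ w = 0 := fun v w => by
      rw [dotProduct_comm]; exact dot_cross_self v w
    have hDΩ : D t ⬝ᵥ Ω t = 0 := by
      rw [hD]
      simp only [add_dotProduct, smul_dotProduct, hperp]
      simp
    have : D t ⬝ᵥ A.mulVec (P t) + P t ⬝ᵥ A.mulVec (D t) = 0 := by
      rw [hsymdot, ← hΩ t]
      have : D t ⬝ᵥ Ω t + D t ⬝ᵥ Ω t = 0 := by rw [hDΩ]; ring
      exact this
    rwa [this] at h1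
  have hdiff : Differentiable ℝ (fun t => P t ⬝ᵥ A.mulVec (P t)) :=
    fun t => (key t).differentiableAt
  have hderiv : ∀ t : ℝ, deriv (fun t => P t ⬝ᵥ A.mulVec (P t)) t = 0 :=
    fun t => (key t).deriv
  intro s t
  have := is_const_of_deriv_eq_zero hdiff hderiv s t
  rw [this]
end

section
/- Let Π : ℝ → ℝ³ be a differentiable curve, 𝕀 a symmetric positive-definite real 3×3 matrix, Ω(t) := 𝕀⁻¹Π(t), and θ ∈ ℝ. Suppose Π satisfies the energy-dissipative (Landau–Lifshitz) rigid body equation Π'(t) + Ω(t) × Π(t) = θ Π(t) × (Π(t) × Ω(t)) for all t. Then for all t, the energy decays at the rate (d/dt)(½ Π(t)·𝕀⁻¹Π(t)) = − θ |Ω(t) × Π(t)|². -/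
open Matrix

/-- A solution `Π` of the energy-dissipative (Landau–Lifshitz) rigid body
equation `Π' + Ω × Π = θ Π × (Π × Ω)`, with `Ω = 𝕀⁻¹Π`, dissipates the energy `½ Π·𝕀⁻¹Π`
at the rate `d/dt (½ Π·𝕀⁻¹Π) = − θ |Ω × Π|²`. -/
theorem statement13
    (I : Matrix (Fin 3) (Fin 3) ℝ) (hI : I.PosDef) (θ : ℝ)
    (P : ℝ → Fin 3 → ℝ) (Ω : ℝ → Fin 3 → ℝ)
    (hΩ : ∀ t : ℝ, Ω t = I⁻¹.mulVec (P t))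
    (P' : ℝ → Fin 3 → ℝ)
    (hP : ∀ t : ℝ, HasDerivAt P (P' t) t)
    (heq : ∀ t : ℝ, P' t + (Ω t ⨯₃ P t) = θ • (P t ⨯₃ (P t ⨯₃ Ω t))) :
    ∀ t : ℝ,
      HasDerivAt (fun s => (1 / 2) * (P s ⬝ᵥ I⁻¹.mulVec (P s)))
        (-(θ * ((Ω t ⨯₃ P t) ⬝ᵥ (Ω t ⨯₃ P t)))) t := by
  intro t
  have hPi : ∀ i, HasDerivAt (fun s => P s i) (P' t i) t :=
    fun i => hasDerivAt_pi.mp (hP t) i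
  have hQi : ∀ i, HasDerivAt (fun s => I⁻¹.mulVec (P s) i) (I⁻¹.mulVec (P' t) i) t := by
    intro i
    simp only [Matrix.mulVec, dotProduct]
    exact HasDerivAt.fun_sum fun k _ => (hPi k).const_mul _
  have hD : HasDerivAt (fun s => (1 / 2) * (P s ⬝ᵥ I⁻¹.mulVec (P s)))
      ((1 / 2) * (∑ i, (P' t i * I⁻¹.mulVec (P t) i + P t i * I⁻¹.mulVec (P' t) i))) t := by
    apply HasDerivAt.const_mul
    simp only [dotProduct]
    exact HasDerivAt.fun_sum fun i _ => (hPi i).mul (hQi i)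
  convert hD using 1
  -- symmetry of I⁻¹
  have hsymm : I⁻¹ᵀ = I⁻¹ := by
    have := hI.isHermitian.inv
    simpa [Matrix.IsHermitian, Matrix.conjTranspose_eq_transpose_of_trivial] using this.eq
  have hswap : P t ⬝ᵥ I⁻¹.mulVec (P' t) = P' t ⬝ᵥ I⁻¹.mulVec (P t) := by
    rw [Matrix.dotProduct_mulVec, ← Matrix.mulVec_transpose, hsymm, dotProduct_comm]
  have hsum : ∑ i, (P' t i * I⁻¹.mulVec (P t) i + P t i * I⁻¹.mulVec (P' t) i)
      = 2 * (P' t ⬝ᵥ Ω t) := by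
    rw [Finset.sum_add_distrib]
    have h1 : ∑ i, P' t i * I⁻¹.mulVec (P t) i = P' t ⬝ᵥ I⁻¹.mulVec (P t) := rfl
    have h2 : ∑ i, P t i * I⁻¹.mulVec (P' t) i = P t ⬝ᵥ I⁻¹.mulVec (P' t) := rfl
    rw [h1, h2, hswap, hΩ t]
    ring
  rw [hsum]
  have hP' : P' t = θ • (P t ⨯₃ (P t ⨯₃ Ω t)) - (Ω t ⨯₃ P t) := by
    have := heq t
    rw [← this]; simp
  rw [hP']
  simp only [cross_apply, dotProduct, Fin.sum_univ_three, Pi.sub_apply, Pi.smul_apply,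
    smul_eq_mul, Matrix.cons_val_zero, Matrix.cons_val_one, Matrix.head_cons,
    Matrix.cons_val_two, Matrix.tail_cons]
  ring
end

section
/- Let ψ, A : ℝ³ → ℝ be smooth (C^∞) functions of (t, x, y), 1-periodic in x and in y, let θ ∈ ℝ, and set ω := −Δψ, J := −ΔA, and Ã := A + θ{ψ, A}. Suppose the modified 2D incompressible MHD equations (magnetic field in the plane, Grad–Shafranov Casimir C = ½∫A², K = Id) hold at every point: ∂_t ω + {ω, ψ} + {Ã, J} = 0 and ∂_t A + {Ã, ψ} = 0. Then for every t ∈ ℝ, the function t ↦ ½ ∫_{[0,1]²} A(t, x, y)² dx dy is differentiable with derivative − θ ∫_{[0,1]²} {ψ, A}(t, x, y)² dx dy. -/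
open MeasureTheory

/-- Partial derivative in the time variable `t` of a function of `(t, x, y)`. -/
noncomputable def pdt (f : ℝ × ℝ × ℝ → ℝ) (p : ℝ × ℝ × ℝ) : ℝ :=
  deriv (fun s => f (s, p.2.1, p.2.2)) p.1

/-- Partial derivative in the first spatial variable `x`. -/
noncomputable def pdx (f : ℝ × ℝ × ℝ → ℝ) (p : ℝ × ℝ × ℝ) : ℝ :=
  deriv (fun s => f (p.1, s, p.2.2)) p.2.1

/-- Partial derivative in the second spatial variable `y`. -/
noncomputable def pdy (f : ℝ × ℝ × ℝ → ℝ) (p : ℝ × ℝ × ℝ) : ℝ :=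
  deriv (fun s => f (p.1, p.2.1, s)) p.2.2

/-- The canonical (Jacobian) bracket `{f, g} = ∂ₓf ∂_y g − ∂_y f ∂ₓ g` in the spatial
variables. -/
noncomputable def jacBracket (f g : ℝ × ℝ × ℝ → ℝ) (p : ℝ × ℝ × ℝ) : ℝ :=
  pdx f p * pdy g p - pdy f p * pdx g p

/-- The spatial Laplacian `Δ = ∂ₓ² + ∂_y²`. -/
noncomputable def spatialLap (f : ℝ × ℝ × ℝ → ℝ) (p : ℝ × ℝ × ℝ) : ℝ :=
  pdx (pdx f) p + pdy (pdy f) p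

namespace S15
variable {f g : ℝ × ℝ × ℝ → ℝ}

lemma hasDerivAt_lineT (hf : Differentiable ℝ f) (p : ℝ × ℝ × ℝ) :
    HasDerivAt (fun u => f (u, p.2.1, p.2.2)) (fderiv ℝ f p ((1:ℝ),(0:ℝ),(0:ℝ))) p.1 := by
  have hc : HasDerivAt (fun u : ℝ => ((u, p.2.1, p.2.2) : ℝ × ℝ × ℝ)) ((1:ℝ),(0:ℝ),(0:ℝ)) p.1 :=
    (hasDerivAt_id p.1).prodMk ((hasDerivAt_const p.1 p.2.1).prodMk (hasDerivAt_const p.1 p.2.2))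
  exact (hf p).hasFDerivAt.comp_hasDerivAt p.1 hc

lemma hasDerivAt_lineX (hf : Differentiable ℝ f) (p : ℝ × ℝ × ℝ) :
    HasDerivAt (fun u => f (p.1, u, p.2.2)) (fderiv ℝ f p ((0:ℝ),(1:ℝ),(0:ℝ))) p.2.1 := by
  have hc : HasDerivAt (fun u : ℝ => ((p.1, u, p.2.2) : ℝ × ℝ × ℝ)) ((0:ℝ),(1:ℝ),(0:ℝ)) p.2.1 :=
    (hasDerivAt_const p.2.1 p.1).prodMk ((hasDerivAt_id p.2.1).prodMk (hasDerivAt_const p.2.1 p.2.2))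
  exact (hf p).hasFDerivAt.comp_hasDerivAt p.2.1 hc

lemma hasDerivAt_lineY (hf : Differentiable ℝ f) (p : ℝ × ℝ × ℝ) :
    HasDerivAt (fun u => f (p.1, p.2.1, u)) (fderiv ℝ f p ((0:ℝ),(0:ℝ),(1:ℝ))) p.2.2 := by
  have hc : HasDerivAt (fun u : ℝ => ((p.1, p.2.1, u) : ℝ × ℝ × ℝ)) ((0:ℝ),(0:ℝ),(1:ℝ)) p.2.2 :=
    (hasDerivAt_const p.2.2 p.1).prodMk ((hasDerivAt_const p.2.2 p.2.1).prodMk (hasDerivAt_id p.2.2))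
  exact (hf p).hasFDerivAt.comp_hasDerivAt p.2.2 hc

lemma pdt_eq (hf : Differentiable ℝ f) (p : ℝ × ℝ × ℝ) :
    pdt f p = fderiv ℝ f p ((1:ℝ),(0:ℝ),(0:ℝ)) := (hasDerivAt_lineT hf p).deriv

lemma pdx_eq (hf : Differentiable ℝ f) (p : ℝ × ℝ × ℝ) :
    pdx f p = fderiv ℝ f p ((0:ℝ),(1:ℝ),(0:ℝ)) := (hasDerivAt_lineX hf p).deriv

lemma pdy_eq (hf : Differentiable ℝ f) (p : ℝ × ℝ × ℝ) :
    pdy f p = fderiv ℝ f p ((0:ℝ),(0:ℝ),(1:ℝ)) := (hasDerivAt_lineY hf p).deriv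

lemma hasDerivAt_pdt (hf : Differentiable ℝ f) (p : ℝ × ℝ × ℝ) :
    HasDerivAt (fun u => f (u, p.2.1, p.2.2)) (pdt f p) p.1 := by
  rw [pdt_eq hf]; exact hasDerivAt_lineT hf p

lemma hasDerivAt_pdx (hf : Differentiable ℝ f) (p : ℝ × ℝ × ℝ) :
    HasDerivAt (fun u => f (p.1, u, p.2.2)) (pdx f p) p.2.1 := by
  rw [pdx_eq hf]; exact hasDerivAt_lineX hf p

lemma hasDerivAt_pdy (hf : Differentiable ℝ f) (p : ℝ × ℝ × ℝ) :
    HasDerivAt (fun u => f (p.1, p.2.1, u)) (pdy f p) p.2.2 := by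
  rw [pdy_eq hf]; exact hasDerivAt_lineY hf p

lemma contDiff_pdx (hf : ContDiff ℝ (⊤ : ℕ∞) f) : ContDiff ℝ (⊤ : ℕ∞) (pdx f) := by
  have : pdx f = fun p => fderiv ℝ f p ((0:ℝ),(1:ℝ),(0:ℝ)) :=
    funext fun p => pdx_eq (hf.differentiable (by simp)) p
  rw [this]
  exact (hf.fderiv_right (mod_cast le_top)).clm_apply contDiff_const

lemma contDiff_pdy (hf : ContDiff ℝ (⊤ : ℕ∞) f) : ContDiff ℝ (⊤ : ℕ∞) (pdy f) := by
  have : pdy f = fun p => fderiv ℝ f p ((0:ℝ),(0:ℝ),(1:ℝ)) :=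
    funext fun p => pdy_eq (hf.differentiable (by simp)) p
  rw [this]
  exact (hf.fderiv_right (mod_cast le_top)).clm_apply contDiff_const

lemma contDiff_pdt (hf : ContDiff ℝ (⊤ : ℕ∞) f) : ContDiff ℝ (⊤ : ℕ∞) (pdt f) := by
  have : pdt f = fun p => fderiv ℝ f p ((1:ℝ),(0:ℝ),(0:ℝ)) :=
    funext fun p => pdt_eq (hf.differentiable (by simp)) p
  rw [this]
  exact (hf.fderiv_right (mod_cast le_top)).clm_apply contDiff_const

lemma contDiff_jac (hf : ContDiff ℝ (⊤ : ℕ∞) f) (hg : ContDiff ℝ (⊤ : ℕ∞) g) :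
    ContDiff ℝ (⊤ : ℕ∞) (jacBracket f g) := by
  have : jacBracket f g = fun p => pdx f p * pdy g p - pdy f p * pdx g p := rfl
  rw [this]
  exact ((contDiff_pdx hf).mul (contDiff_pdy hg)).sub ((contDiff_pdy hf).mul (contDiff_pdx hg))


lemma pdx_mul (hf : Differentiable ℝ f) (hg : Differentiable ℝ g) (p : ℝ × ℝ × ℝ) :
    pdx (fun q => f q * g q) p = pdx f p * g p + f p * pdx g p :=
  ((hasDerivAt_pdx hf p).mul (hasDerivAt_pdx hg p)).deriv

lemma pdy_mul (hf : Differentiable ℝ f) (hg : Differentiable ℝ g) (p : ℝ × ℝ × ℝ) :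
    pdy (fun q => f q * g q) p = pdy f p * g p + f p * pdy g p :=
  ((hasDerivAt_pdy hf p).mul (hasDerivAt_pdy hg p)).deriv

lemma pdx_add (hf : Differentiable ℝ f) (hg : Differentiable ℝ g) (p : ℝ × ℝ × ℝ) :
    pdx (fun q => f q + g q) p = pdx f p + pdx g p :=
  ((hasDerivAt_pdx hf p).add (hasDerivAt_pdx hg p)).deriv

lemma pdy_add (hf : Differentiable ℝ f) (hg : Differentiable ℝ g) (p : ℝ × ℝ × ℝ) :
    pdy (fun q => f q + g q) p = pdy f p + pdy g p :=
  ((hasDerivAt_pdy hf p).add (hasDerivAt_pdy hg p)).deriv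

lemma pdx_const_mul (c : ℝ) (hf : Differentiable ℝ f) (p : ℝ × ℝ × ℝ) :
    pdx (fun q => c * f q) p = c * pdx f p :=
  ((hasDerivAt_pdx hf p).const_mul c).deriv

lemma pdy_const_mul (c : ℝ) (hf : Differentiable ℝ f) (p : ℝ × ℝ × ℝ) :
    pdy (fun q => c * f q) p = c * pdy f p :=
  ((hasDerivAt_pdy hf p).const_mul c).deriv

lemma clairaut (hf : ContDiff ℝ (⊤ : ℕ∞) f) (p : ℝ × ℝ × ℝ) :
    pdx (pdy f) p = pdy (pdx f) p := by
  have hdf : Differentiable ℝ f := hf.differentiable (by simp)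
  have hfd : ContDiff ℝ (⊤ : ℕ∞) (fderiv ℝ f) := hf.fderiv_right (mod_cast le_top)
  have hfdd : Differentiable ℝ (fderiv ℝ f) := hfd.differentiable (by simp)
  have h2 : HasFDerivAt (fderiv ℝ f) (fderiv ℝ (fderiv ℝ f) p) p := (hfdd p).hasFDerivAt
  have hsym := second_derivative_symmetric (fun y => (hdf y).hasFDerivAt) h2
  have e1 : pdy f = fun q => fderiv ℝ f q ((0:ℝ),(0:ℝ),(1:ℝ)) := funext fun q => pdy_eq hdf q
  have e2 : pdx f = fun q => fderiv ℝ f q ((0:ℝ),(1:ℝ),(0:ℝ)) := funext fun q => pdx_eq hdf q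
  have d1 : Differentiable ℝ (fun q => fderiv ℝ f q ((0:ℝ),(0:ℝ),(1:ℝ))) :=
    (hfd.clm_apply contDiff_const).differentiable (by simp)
  have d2 : Differentiable ℝ (fun q => fderiv ℝ f q ((0:ℝ),(1:ℝ),(0:ℝ))) :=
    (hfd.clm_apply contDiff_const).differentiable (by simp)
  rw [e1, e2, pdx_eq d1, pdy_eq d2]
  rw [fderiv_clm_apply (hfdd p) (differentiableAt_const _),
      fderiv_clm_apply (hfdd p) (differentiableAt_const _)]
  simp [hsym ((0:ℝ),(1:ℝ),(0:ℝ)) ((0:ℝ),(0:ℝ),(1:ℝ))]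


def Per (f : ℝ × ℝ × ℝ → ℝ) : Prop :=
  (∀ t x y : ℝ, f (t, x + 1, y) = f (t, x, y)) ∧ (∀ t x y : ℝ, f (t, x, y + 1) = f (t, x, y))

lemma Per.pdx (hp : Per f) : Per (pdx f) := by
  constructor
  · intro t x y
    show deriv (fun s => f (t, s, y)) (x + 1) = deriv (fun s => f (t, s, y)) x
    rw [← deriv_comp_add_const (fun s => f (t, s, y)) 1 x]
    congr 1
    funext s
    exact hp.1 t s y
  · intro t x y
    show deriv (fun s => f (t, s, y + 1)) x = deriv (fun s => f (t, s, y)) x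
    congr 1
    exact funext fun s => hp.2 t s y

lemma Per.pdy (hp : Per f) : Per (pdy f) := by
  constructor
  · intro t x y
    show deriv (fun s => f (t, x + 1, s)) y = deriv (fun s => f (t, x, s)) y
    congr 1
    exact funext fun s => hp.1 t x s
  · intro t x y
    show deriv (fun s => f (t, x, s)) (y + 1) = deriv (fun s => f (t, x, s)) y
    rw [← deriv_comp_add_const (fun s => f (t, x, s)) 1 y]
    congr 1
    funext s
    exact hp.2 t x s

lemma Per.mul (hp : Per f) (hq : Per g) : Per (fun q => f q * g q) :=
  ⟨fun t x y => by simp only [hp.1 t x y, hq.1 t x y],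
   fun t x y => by simp only [hp.2 t x y, hq.2 t x y]⟩

lemma Per.add (hp : Per f) (hq : Per g) : Per (fun q => f q + g q) :=
  ⟨fun t x y => by simp only [hp.1 t x y, hq.1 t x y],
   fun t x y => by simp only [hp.2 t x y, hq.2 t x y]⟩

lemma Per.const_mul (c : ℝ) (hp : Per f) : Per (fun q => c * f q) :=
  ⟨fun t x y => by simp only [hp.1 t x y], fun t x y => by simp only [hp.2 t x y]⟩

lemma Per.jac (hp : Per f) (hq : Per g) : Per (jacBracket f g) := by
  have h1 := hp.pdx; have h2 := hq.pdy; have h3 := hp.pdy; have h4 := hq.pdx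
  exact ⟨fun t x y => by
      show _ - _ = _ - _
      rw [h1.1 t x y, h2.1 t x y, h3.1 t x y, h4.1 t x y],
    fun t x y => by
      show _ - _ = _ - _
      rw [h1.2 t x y, h2.2 t x y, h3.2 t x y, h4.2 t x y]⟩


noncomputable abbrev Sq : Set (ℝ × ℝ) := Set.Icc (0 : ℝ) 1 ×ˢ Set.Icc (0 : ℝ) 1

lemma continuous_slice (hf : Continuous f) (t : ℝ) :
    Continuous (fun q : ℝ × ℝ => f (t, q.1, q.2)) := by
  fun_prop

lemma integrableOn_slice (hf : Continuous f) (t : ℝ) :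
    IntegrableOn (fun q : ℝ × ℝ => f (t, q.1, q.2)) Sq :=
  (continuous_slice hf t).continuousOn.integrableOn_compact (isCompact_Icc.prod isCompact_Icc)

lemma integral_pdx_zero (hf : ContDiff ℝ (⊤ : ℕ∞) f)
    (hper : ∀ t x y : ℝ, f (t, x + 1, y) = f (t, x, y)) (t : ℝ) :
    ∫ q in Sq, pdx f (t, q.1, q.2) = 0 := by
  have hdf : Differentiable ℝ f := hf.differentiable (by simp)
  have hcont : Continuous (pdx f) := (contDiff_pdx hf).continuous
  have hint : IntegrableOn (fun q : ℝ × ℝ => pdx f (t, q.1, q.2)) Sq :=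
    integrableOn_slice hcont t
  have key : ∀ y : ℝ, (∫ x in Set.Icc (0:ℝ) 1, pdx f (t, x, y)) = 0 := by
    intro y
    have hdiff : ∀ x : ℝ, DifferentiableAt ℝ (fun s => f (t, s, y)) x := fun x =>
      (hasDerivAt_pdx hdf (t, x, y)).differentiableAt
    have hderiv : (fun x => deriv (fun s => f (t, s, y)) x) = fun x => pdx f (t, x, y) := rfl
    have hcd : Continuous fun x => deriv (fun s => f (t, s, y)) x := by
      rw [hderiv]; fun_prop
    rw [MeasureTheory.integral_Icc_eq_integral_Ioc,
        ← intervalIntegral.integral_of_le (by norm_num : (0:ℝ) ≤ 1)]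
    have := intervalIntegral.integral_deriv_eq_sub (f := fun s => f (t, s, y))
      (fun x _ => hdiff x) (hcd.intervalIntegrable 0 1)
    show (∫ x in (0:ℝ)..1, deriv (fun s => f (t, s, y)) x) = 0
    rw [this]
    have := hper t 0 y
    norm_num at this
    simp [this]
  rw [show (∫ q in Sq, pdx f (t, q.1, q.2)) =
      ∫ q, (fun q : ℝ × ℝ => pdx f (t, q.1, q.2)) q
        ∂(((volume : Measure ℝ).restrict (Set.Icc 0 1)).prod
          ((volume : Measure ℝ).restrict (Set.Icc 0 1))) by
    rw [Measure.prod_restrict, ← Measure.volume_eq_prod]]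
  rw [MeasureTheory.integral_prod_symm]
  · simp only []
    have : ∀ y : ℝ, (∫ x, pdx f (t, x, y) ∂((volume : Measure ℝ).restrict (Set.Icc 0 1))) = 0 :=
      fun y => key y
    calc (∫ y, ∫ x, pdx f (t, x, y) ∂((volume : Measure ℝ).restrict (Set.Icc 0 1))
            ∂((volume : Measure ℝ).restrict (Set.Icc 0 1)))
        = ∫ _, (0:ℝ) ∂((volume : Measure ℝ).restrict (Set.Icc 0 1)) := by
          congr 1; funext y; exact this y
      _ = 0 := integral_zero _ _
  · rw [Measure.prod_restrict, ← Measure.volume_eq_prod]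
    exact hint

lemma integral_pdy_zero (hf : ContDiff ℝ (⊤ : ℕ∞) f)
    (hper : ∀ t x y : ℝ, f (t, x, y + 1) = f (t, x, y)) (t : ℝ) :
    ∫ q in Sq, pdy f (t, q.1, q.2) = 0 := by
  have hdf : Differentiable ℝ f := hf.differentiable (by simp)
  have hcont : Continuous (pdy f) := (contDiff_pdy hf).continuous
  have hint : IntegrableOn (fun q : ℝ × ℝ => pdy f (t, q.1, q.2)) Sq :=
    integrableOn_slice hcont t
  have key : ∀ x : ℝ, (∫ y in Set.Icc (0:ℝ) 1, pdy f (t, x, y)) = 0 := by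
    intro x
    have hdiff : ∀ y : ℝ, DifferentiableAt ℝ (fun s => f (t, x, s)) y := fun y =>
      (hasDerivAt_pdy hdf (t, x, y)).differentiableAt
    have hderiv : (fun y => deriv (fun s => f (t, x, s)) y) = fun y => pdy f (t, x, y) := rfl
    have hcd : Continuous fun y => deriv (fun s => f (t, x, s)) y := by
      rw [hderiv]; fun_prop
    rw [MeasureTheory.integral_Icc_eq_integral_Ioc,
        ← intervalIntegral.integral_of_le (by norm_num : (0:ℝ) ≤ 1)]
    have := intervalIntegral.integral_deriv_eq_sub (f := fun s => f (t, x, s))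
      (fun y _ => hdiff y) (hcd.intervalIntegrable 0 1)
    show (∫ y in (0:ℝ)..1, deriv (fun s => f (t, x, s)) y) = 0
    rw [this]
    have := hper t x 0
    norm_num at this
    simp [this]
  rw [show (∫ q in Sq, pdy f (t, q.1, q.2)) =
      ∫ q, (fun q : ℝ × ℝ => pdy f (t, q.1, q.2)) q
        ∂(((volume : Measure ℝ).restrict (Set.Icc 0 1)).prod
          ((volume : Measure ℝ).restrict (Set.Icc 0 1))) by
    rw [Measure.prod_restrict, ← Measure.volume_eq_prod]]
  rw [MeasureTheory.integral_prod]
  · calc (∫ x, ∫ y, pdy f (t, x, y) ∂((volume : Measure ℝ).restrict (Set.Icc 0 1))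
            ∂((volume : Measure ℝ).restrict (Set.Icc 0 1)))
        = ∫ _, (0:ℝ) ∂((volume : Measure ℝ).restrict (Set.Icc 0 1)) := by
          congr 1; funext x; exact key x
      _ = 0 := integral_zero _ _
  · rw [Measure.prod_restrict, ← Measure.volume_eq_prod]
    exact hint


lemma integral_jac_zero {G ψ : ℝ × ℝ × ℝ → ℝ} (hG : ContDiff ℝ (⊤ : ℕ∞) G)
    (hψ : ContDiff ℝ (⊤ : ℕ∞) ψ) (hGper : Per G) (hψper : Per ψ) (t : ℝ) :
    ∫ q in Sq, jacBracket G ψ (t, q.1, q.2) = 0 := by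
  have hdG : Differentiable ℝ G := hG.differentiable (by simp)
  have hdψy : Differentiable ℝ (pdy ψ) :=
    (contDiff_pdy hψ).differentiable (by simp)
  have hdψx : Differentiable ℝ (pdx ψ) :=
    (contDiff_pdx hψ).differentiable (by simp)
  set H1 : ℝ × ℝ × ℝ → ℝ := fun q => G q * pdy ψ q with hH1
  set H2 : ℝ × ℝ × ℝ → ℝ := fun q => G q * pdx ψ q with hH2
  have hH1s : ContDiff ℝ (⊤ : ℕ∞) H1 := hG.mul (contDiff_pdy hψ)
  have hH2s : ContDiff ℝ (⊤ : ℕ∞) H2 := hG.mul (contDiff_pdx hψ)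
  have hH1p : Per H1 := hGper.mul hψper.pdy
  have hH2p : Per H2 := hGper.mul hψper.pdx
  have e : ∀ p : ℝ × ℝ × ℝ, jacBracket G ψ p = pdx H1 p - pdy H2 p := by
    intro p
    rw [hH1, hH2, pdx_mul hdG hdψy p, pdy_mul hdG hdψx p, clairaut hψ p]
    show pdx G p * pdy ψ p - pdy G p * pdx ψ p = _
    ring
  calc (∫ q in Sq, jacBracket G ψ (t, q.1, q.2))
      = ∫ q in Sq, (pdx H1 (t, q.1, q.2) - pdy H2 (t, q.1, q.2)) := by
        congr 1; funext q; exact e (t, q.1, q.2)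
    _ = (∫ q in Sq, pdx H1 (t, q.1, q.2)) - ∫ q in Sq, pdy H2 (t, q.1, q.2) :=
        integral_sub (integrableOn_slice (contDiff_pdx hH1s).continuous t)
          (integrableOn_slice (contDiff_pdy hH2s).continuous t)
    _ = 0 := by
        rw [integral_pdx_zero hH1s hH1p.1 t, integral_pdy_zero hH2s hH2p.2 t]; ring


lemma hasDerivAt_sq_integral {A : ℝ × ℝ × ℝ → ℝ} (hA : ContDiff ℝ (⊤ : ℕ∞) A) (t : ℝ) :
    HasDerivAt (fun s => ∫ q in Sq, (A (s, q.1, q.2)) ^ 2)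
      (∫ q in Sq, 2 * A (t, q.1, q.2) * pdt A (t, q.1, q.2)) t := by
  have hdA : Differentiable ℝ A := hA.differentiable (by simp)
  have hpdtc : Continuous (pdt A) := (contDiff_pdt hA).continuous
  set μ : Measure (ℝ × ℝ) := volume.restrict Sq with hμ
  set F : ℝ → ℝ × ℝ → ℝ := fun s q => (A (s, q.1, q.2)) ^ 2 with hF
  set F' : ℝ → ℝ × ℝ → ℝ := fun s q => 2 * A (s, q.1, q.2) * pdt A (s, q.1, q.2) with hF'
  have hgc : Continuous (fun z : ℝ × ℝ × ℝ => 2 * A z * pdt A z) := by fun_prop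
  obtain ⟨C, hC⟩ := ((isCompact_Icc (a := t - 1) (b := t + 1)).prod
      ((isCompact_Icc (a := (0:ℝ)) (b := 1)).prod (isCompact_Icc (a := (0:ℝ)) (b := 1)))).exists_bound_of_continuousOn
      (f := fun z : ℝ × ℝ × ℝ => 2 * A z * pdt A z) hgc.continuousOn
  have hmeasSq : MeasurableSet Sq := (measurableSet_Icc.prod measurableSet_Icc)
  have key := hasDerivAt_integral_of_dominated_loc_of_deriv_le (μ := μ) (F := F) (F' := F')
      (x₀ := t) (bound := fun _ => C) (s := Metric.ball t 1) (Metric.ball_mem_nhds t one_pos)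
      (Filter.Eventually.of_forall fun s =>
        ((continuous_slice (f := fun p => (A p) ^ 2) (by fun_prop) s)).aestronglyMeasurable)
      ((integrableOn_slice (f := fun p => (A p) ^ 2) (by fun_prop) t))
      ((continuous_slice (f := fun p => 2 * A p * pdt A p) hgc t).aestronglyMeasurable)
      ?_ (integrableOn_const
        (((isCompact_Icc.prod isCompact_Icc).measure_lt_top.ne)))
      ?_
  · exact key.2
  · filter_upwards [MeasureTheory.ae_restrict_mem hmeasSq] with q hq
    intro x hx
    have hx' : x ∈ Set.Icc (t - 1) (t + 1) := by
      rw [Real.ball_eq_Ioo] at hx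
      exact Set.Ioo_subset_Icc_self hx
    exact hC (x, q.1, q.2) ⟨hx', hq⟩
  · filter_upwards with q
    intro x hx
    have h0 : HasDerivAt (fun u => A (u, q.1, q.2)) (pdt A (x, q.1, q.2)) x :=
      hasDerivAt_pdt hdA (x, q.1, q.2)
    have := h0.fun_pow 2
    simpa [hF'] using this

end S15

/-- For smooth, spatially `1`-periodic solutions of the modified 2D
incompressible MHD equations with `𝐁` in the plane and Grad–Shafranov Casimir `½∫A²`
(K = Id): `∂ₜω + {ω, ψ} + {Ã, J} = 0`, `∂ₜA + {Ã, ψ} = 0`, where `ω = −Δψ`, `J = −ΔA`,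
`Ã = A + θ{ψ, A}`, the Casimir decays at the rate
`d/dt (½∫A²) = −θ ∫ {ψ, A}²` (integrals over the unit square). -/
theorem statement15
    (ψ A : ℝ × ℝ × ℝ → ℝ) (θ : ℝ)
    (hψ : ContDiff ℝ (⊤ : ℕ∞) ψ) (hA : ContDiff ℝ (⊤ : ℕ∞) A)
    (hψx : ∀ t x y : ℝ, ψ (t, x + 1, y) = ψ (t, x, y))
    (hψy : ∀ t x y : ℝ, ψ (t, x, y + 1) = ψ (t, x, y))
    (hAx : ∀ t x y : ℝ, A (t, x + 1, y) = A (t, x, y))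
    (hAy : ∀ t x y : ℝ, A (t, x, y + 1) = A (t, x, y))
    (ω J Atil : ℝ × ℝ × ℝ → ℝ)
    (hω : ω = fun p => -spatialLap ψ p)
    (hJ : J = fun p => -spatialLap A p)
    (hAtil : Atil = fun p => A p + θ * jacBracket ψ A p)
    (heq1 : ∀ p : ℝ × ℝ × ℝ, pdt ω p + jacBracket ω ψ p + jacBracket Atil J p = 0)
    (heq2 : ∀ p : ℝ × ℝ × ℝ, pdt A p + jacBracket Atil ψ p = 0) :
    ∀ t : ℝ,
      HasDerivAt
        (fun s => (1 / 2) *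
          ∫ q in Set.Icc (0 : ℝ) 1 ×ˢ Set.Icc (0 : ℝ) 1, (A (s, q.1, q.2)) ^ 2)
        (-(θ * ∫ q in Set.Icc (0 : ℝ) 1 ×ˢ Set.Icc (0 : ℝ) 1,
            (jacBracket ψ A (t, q.1, q.2)) ^ 2)) t := by
  classical
  intro t
  have hdA : Differentiable ℝ A := hA.differentiable (by simp)
  have hdψ : Differentiable ℝ ψ := hψ.differentiable (by simp)
  set B : ℝ × ℝ × ℝ → ℝ := jacBracket ψ A with hBdef
  have hBs : ContDiff ℝ (⊤ : ℕ∞) B := S15.contDiff_jac hψ hA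
  have hdB : Differentiable ℝ B := hBs.differentiable (by simp)
  have hθB : Differentiable ℝ (fun q => θ * B q) := hdB.const_mul θ
  have hAtil' : Atil = fun q => A q + θ * B q := hAtil
  set G : ℝ × ℝ × ℝ → ℝ := fun q => A q * A q + (2 * θ) * (A q * B q) with hGdef
  have hGs : ContDiff ℝ (⊤ : ℕ∞) G := (hA.mul hA).add (contDiff_const.mul (hA.mul hBs))
  have hPA : S15.Per A := ⟨hAx, hAy⟩
  have hPψ : S15.Per ψ := ⟨hψx, hψy⟩
  have hPB : S15.Per B := hPψ.jac hPA
  have hPG : S15.Per G := (hPA.mul hPA).add (S15.Per.const_mul _ (hPA.mul hPB))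
  -- derivative formulas
  have e1 : ∀ p, pdx Atil p = pdx A p + θ * pdx B p := by
    intro p
    rw [hAtil', S15.pdx_add hdA hθB p, S15.pdx_const_mul θ hdB p]
  have e2 : ∀ p, pdy Atil p = pdy A p + θ * pdy B p := by
    intro p
    rw [hAtil', S15.pdy_add hdA hθB p, S15.pdy_const_mul θ hdB p]
  have hAB : Differentiable ℝ (fun q => A q * B q) := hdA.mul hdB
  have hcAB : Differentiable ℝ (fun q => (2 * θ) * (A q * B q)) := hAB.const_mul _
  have e3 : ∀ p, pdx G p =
      (pdx A p * A p + A p * pdx A p) + (2 * θ) * (pdx A p * B p + A p * pdx B p) := by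
    intro p
    rw [hGdef, S15.pdx_add (f := fun q => A q * A q) (hdA.mul hdA) hcAB p, S15.pdx_mul hdA hdA p,
      S15.pdx_const_mul _ hAB p, S15.pdx_mul hdA hdB p]
  have e4 : ∀ p, pdy G p =
      (pdy A p * A p + A p * pdy A p) + (2 * θ) * (pdy A p * B p + A p * pdy B p) := by
    intro p
    rw [hGdef, S15.pdy_add (f := fun q => A q * A q) (hdA.mul hdA) hcAB p, S15.pdy_mul hdA hdA p,
      S15.pdy_const_mul _ hAB p, S15.pdy_mul hdA hdB p]
  -- pointwise identity
  have key : ∀ p : ℝ × ℝ × ℝ,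
      2 * A p * pdt A p = -(jacBracket G ψ p) - (2 * θ) * (B p) ^ 2 := by
    intro p
    have h2 : pdt A p = -jacBracket Atil ψ p := by linarith [heq2 p]
    have hb : B p = pdx ψ p * pdy A p - pdy ψ p * pdx A p := rfl
    rw [h2]
    show 2 * A p * -(pdx Atil p * pdy ψ p - pdy Atil p * pdx ψ p)
        = -(pdx G p * pdy ψ p - pdy G p * pdx ψ p) - (2 * θ) * (B p) ^ 2
    rw [e1 p, e2 p, e3 p, e4 p, hb]
    ring
  -- the integral identity
  have hjc : Continuous (jacBracket G ψ) := (S15.contDiff_jac hGs hψ).continuous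
  have hBc : Continuous B := hBs.continuous
  have I2 : (∫ q in S15.Sq, 2 * A (t, q.1, q.2) * pdt A (t, q.1, q.2))
      = -(2 * θ) * ∫ q in S15.Sq, (B (t, q.1, q.2)) ^ 2 := by
    calc (∫ q in S15.Sq, 2 * A (t, q.1, q.2) * pdt A (t, q.1, q.2))
        = ∫ q in S15.Sq,
            (-(jacBracket G ψ (t, q.1, q.2)) - (2 * θ) * (B (t, q.1, q.2)) ^ 2) := by
          congr 1; funext q; exact key (t, q.1, q.2)
      _ = (∫ q in S15.Sq, -(jacBracket G ψ (t, q.1, q.2)))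
            - ∫ q in S15.Sq, (2 * θ) * (B (t, q.1, q.2)) ^ 2 := by
          exact integral_sub
            (S15.integrableOn_slice (f := fun p => -(jacBracket G ψ p)) hjc.neg t)
            (S15.integrableOn_slice (f := fun p => (2 * θ) * (B p) ^ 2)
              (by fun_prop) t)
      _ = -(∫ q in S15.Sq, jacBracket G ψ (t, q.1, q.2))
            - (2 * θ) * ∫ q in S15.Sq, (B (t, q.1, q.2)) ^ 2 := by
          rw [integral_neg, MeasureTheory.integral_const_mul]
      _ = -(2 * θ) * ∫ q in S15.Sq, (B (t, q.1, q.2)) ^ 2 := by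
          rw [S15.integral_jac_zero hGs hψ hPG hPψ t]; ring
  have hmain := (S15.hasDerivAt_sq_integral hA t).const_mul (1 / 2 : ℝ)
  convert hmain using 1
  · rfl
  · rfl
  rw [I2]
  ring
end

section
/- Let ψ, A : ℝ³ → ℝ be smooth (C^∞) functions of (t, x, y), 1-periodic in x and in y, let θ ∈ ℝ, and set ω := −Δψ, J := −ΔA, and Ã := A + θ{ψ, A}. Suppose the modified 2D incompressible MHD equations hold at every point: ∂_t ω + {ω, ψ} + {Ã, J} = 0 and ∂_t A + {Ã, ψ} = 0. Then the energy is exactly preserved: the function t ↦ ∫_{[0,1]²} (½ |∇ψ|² + ½ |∇A|²)(t, x, y) dx dy is constant on ℝ, where ∇ denotes the spatial gradient (∂_x, ∂_y). -/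
open MeasureTheory

abbrev E3 := ℝ × ℝ × ℝ
noncomputable def e1 : E3 := (1,0,0)
noncomputable def e2 : E3 := (0,1,0)
noncomputable def e3 : E3 := (0,0,1)

/-- directional derivative as fderiv application -/
noncomputable def D (v : E3) (f : E3 → ℝ) : E3 → ℝ := fun p => fderiv ℝ f p v

lemma hasDerivAt_sec_t (f : E3 → ℝ) (hf : Differentiable ℝ f) (p : E3) :
    HasDerivAt (fun s => f (s, p.2.1, p.2.2)) (fderiv ℝ f p e1) p.1 := by
  have hL : HasDerivAt (fun s : ℝ => ((s, p.2.1, p.2.2) : E3)) e1 p.1 :=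
    (hasDerivAt_id _).prodMk ((hasDerivAt_const _ _).prodMk (hasDerivAt_const _ _))
  have := (hf (p.1, p.2.1, p.2.2)).hasFDerivAt.comp_hasDerivAt p.1 hL
  simpa [Function.comp_def] using this

lemma hasDerivAt_sec_x (f : E3 → ℝ) (hf : Differentiable ℝ f) (p : E3) :
    HasDerivAt (fun s => f (p.1, s, p.2.2)) (fderiv ℝ f p e2) p.2.1 := by
  have hL : HasDerivAt (fun s : ℝ => ((p.1, s, p.2.2) : E3)) e2 p.2.1 :=
    (hasDerivAt_const _ _).prodMk ((hasDerivAt_id _).prodMk (hasDerivAt_const _ _))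
  have := (hf (p.1, p.2.1, p.2.2)).hasFDerivAt.comp_hasDerivAt p.2.1 hL
  simpa [Function.comp_def] using this

lemma hasDerivAt_sec_y (f : E3 → ℝ) (hf : Differentiable ℝ f) (p : E3) :
    HasDerivAt (fun s => f (p.1, p.2.1, s)) (fderiv ℝ f p e3) p.2.2 := by
  have hL : HasDerivAt (fun s : ℝ => ((p.1, p.2.1, s) : E3)) e3 p.2.2 :=
    (hasDerivAt_const _ _).prodMk ((hasDerivAt_const _ _).prodMk (hasDerivAt_id _))
  have := (hf (p.1, p.2.1, p.2.2)).hasFDerivAt.comp_hasDerivAt p.2.2 hL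
  simpa [Function.comp_def] using this

lemma pdt_eq (f : E3 → ℝ) (hf : Differentiable ℝ f) : pdt f = D e1 f := by
  funext p; exact (hasDerivAt_sec_t f hf p).deriv

lemma pdx_eq (f : E3 → ℝ) (hf : Differentiable ℝ f) : pdx f = D e2 f := by
  funext p; exact (hasDerivAt_sec_x f hf p).deriv

lemma pdy_eq (f : E3 → ℝ) (hf : Differentiable ℝ f) : pdy f = D e3 f := by
  funext p; exact (hasDerivAt_sec_y f hf p).deriv

lemma contDiff_D (v : E3) (f : E3 → ℝ) (hf : ContDiff ℝ (⊤:ℕ∞) f) :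
    ContDiff ℝ (⊤:ℕ∞) (D v f) := by
  have h1 : ContDiff ℝ (⊤:ℕ∞) (fderiv ℝ f) := hf.fderiv_right (by simp)
  exact h1.clm_apply contDiff_const

/-- Clairaut -/
lemma D_comm (v w : E3) (f : E3 → ℝ) (hf : ContDiff ℝ (⊤:ℕ∞) f) :
    D v (D w f) = D w (D v f) := by
  funext p
  have hdf : Differentiable ℝ f := hf.differentiable (by simp)
  have h1 : ContDiff ℝ (⊤:ℕ∞) (fderiv ℝ f) := hf.fderiv_right (by simp)
  have hdff : DifferentiableAt ℝ (fderiv ℝ f) p := (h1.differentiable (by simp)) p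
  have hsym := second_derivative_symmetric (f := f) (f' := fderiv ℝ f)
    (f'' := fderiv ℝ (fderiv ℝ f) p) (x := p)
    (fun y => (hdf y).hasFDerivAt) hdff.hasFDerivAt
  have hDapp : ∀ u u' : E3, D u (D u' f) p = fderiv ℝ (fderiv ℝ f) p u u' := by
    intro u u'
    have h := fderiv_clm_apply (c := fderiv ℝ f) (u := fun _ => u') hdff
      (differentiableAt_const _)
    show fderiv ℝ (fun y => (fderiv ℝ f y) ((fun _ => u') y)) p u = _
    rw [h]
    simp
  rw [hDapp, hDapp, hsym]

/-- smooth + doubly periodic -/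
structure Nice (f : E3 → ℝ) : Prop where
  smooth : ContDiff ℝ (⊤:ℕ∞) f
  perx : ∀ p : E3, f (p.1, p.2.1 + 1, p.2.2) = f p
  pery : ∀ p : E3, f (p.1, p.2.1, p.2.2 + 1) = f p

lemma Nice.diff {f : E3 → ℝ} (hf : Nice f) : Differentiable ℝ f :=
  hf.smooth.differentiable (by simp)

lemma Nice.cont {f : E3 → ℝ} (hf : Nice f) : Continuous f := hf.smooth.continuous

lemma fderiv_periodic {f : E3 → ℝ} (hf : Differentiable ℝ f) (c : E3)
    (h : ∀ q : E3, f (q + c) = f q) (p : E3) :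
    fderiv ℝ f (p + c) = fderiv ℝ f p := by
  have hc : HasFDerivAt (fun q : E3 => q + c) (ContinuousLinearMap.id ℝ E3) p := by
    simpa using (hasFDerivAt_id p).add_const c
  have hcomp : HasFDerivAt (fun q => f (q + c)) (fderiv ℝ f (p + c)) p := by
    simpa [Function.comp_def] using (hf (p + c)).hasFDerivAt.comp p hc
  have heqf : (fun q => f (q + c)) = f := by funext q; rw [h]
  rw [heqf] at hcomp
  exact hcomp.fderiv.symm

lemma Nice.D {f : E3 → ℝ} (hf : Nice f) (v : E3) : Nice (D v f) := by
  refine ⟨contDiff_D v f hf.smooth, ?_, ?_⟩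
  · intro p
    have hx : ∀ q : E3, f (q + (0,1,0)) = f q := by
      intro q
      have h1 : q + ((0:ℝ),(1:ℝ),(0:ℝ)) = (q.1, q.2.1 + 1, q.2.2) := by
        simp [Prod.ext_iff]
      rw [h1, hf.perx q]
    have := fderiv_periodic hf.diff (0,1,0) hx p
    show fderiv ℝ f (p.1, p.2.1 + 1, p.2.2) v = fderiv ℝ f p v
    have hpt : ((p.1, p.2.1 + 1, p.2.2) : E3) = p + (0,1,0) := by
      simp [Prod.ext_iff]
    rw [hpt, this]
  · intro p
    have hy : ∀ q : E3, f (q + (0,0,1)) = f q := by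
      intro q
      have h1 : q + ((0:ℝ),(0:ℝ),(1:ℝ)) = (q.1, q.2.1, q.2.2 + 1) := by
        simp [Prod.ext_iff]
      rw [h1, hf.pery q]
    have := fderiv_periodic hf.diff (0,0,1) hy p
    show fderiv ℝ f (p.1, p.2.1, p.2.2 + 1) v = fderiv ℝ f p v
    have hpt : ((p.1, p.2.1, p.2.2 + 1) : E3) = p + (0,0,1) := by
      simp [Prod.ext_iff]
    rw [hpt, this]

lemma Nice.add {f g : E3 → ℝ} (hf : Nice f) (hg : Nice g) : Nice (f + g) :=
  ⟨hf.smooth.add hg.smooth, fun p => by simp [hf.perx p, hg.perx p],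
    fun p => by simp [hf.pery p, hg.pery p]⟩

lemma Nice.mul {f g : E3 → ℝ} (hf : Nice f) (hg : Nice g) : Nice (f * g) :=
  ⟨hf.smooth.mul hg.smooth, fun p => by simp [hf.perx p, hg.perx p],
    fun p => by simp [hf.pery p, hg.pery p]⟩

lemma Nice.neg {f : E3 → ℝ} (hf : Nice f) : Nice (-f) :=
  ⟨hf.smooth.neg, fun p => by simp [hf.perx p], fun p => by simp [hf.pery p]⟩

lemma Nice.smul {f : E3 → ℝ} (c : ℝ) (hf : Nice f) : Nice (fun p => c * f p) :=
  ⟨contDiff_const.mul hf.smooth, fun p => by simp [hf.perx p], fun p => by simp [hf.pery p]⟩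

lemma Nice.sub {f g : E3 → ℝ} (hf : Nice f) (hg : Nice g) : Nice (f - g) := by
  have := hf.add hg.neg
  simpa [sub_eq_add_neg] using this

/-- product rule for D -/
lemma D_mul {f g : E3 → ℝ} (hf : Differentiable ℝ f) (hg : Differentiable ℝ g) (v : E3) :
    D v (f * g) = fun p => f p * D v g p + g p * D v f p := by
  funext p
  show fderiv ℝ (fun q => f q * g q) p v = _
  rw [fderiv_fun_mul (hf p) (hg p)]
  simp [D, mul_comm]

lemma D_add {f g : E3 → ℝ} (hf : Differentiable ℝ f) (hg : Differentiable ℝ g) (v : E3) :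
    D v (f + g) = fun p => D v f p + D v g p := by
  funext p
  show fderiv ℝ (fun q => f q + g q) p v = _
  rw [fderiv_fun_add (hf p) (hg p)]
  rfl

lemma D_smul {f : E3 → ℝ} (hf : Differentiable ℝ f) (c : ℝ) (v : E3) :
    D v (fun p => c * f p) = fun p => c * D v f p := by
  funext p
  show fderiv ℝ (fun q => c * f q) p v = _
  rw [fderiv_const_mul (hf p)]
  rfl

open Set in
noncomputable def Qset : Set (ℝ × ℝ) := Icc (0:ℝ) 1 ×ˢ Icc (0:ℝ) 1

/-- spatial integral at time t -/
noncomputable def SI (f : E3 → ℝ) (t : ℝ) : ℝ := ∫ q in Qset, f (t, q.1, q.2)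

lemma cont_section {f : E3 → ℝ} (hf : Continuous f) (t : ℝ) :
    Continuous (fun q : ℝ × ℝ => f (t, q.1, q.2)) := by
  exact hf.comp (by fun_prop)

lemma integrableOn_section {f : E3 → ℝ} (hf : Continuous f) (t : ℝ) :
    IntegrableOn (fun q : ℝ × ℝ => f (t, q.1, q.2)) Qset := by
  exact (cont_section hf t).continuousOn.integrableOn_compact
    (isCompact_Icc.prod isCompact_Icc)

lemma SI_prod {f : E3 → ℝ} (hf : Continuous f) (t : ℝ) :
    SI f t = ∫ x in Set.Icc (0:ℝ) 1, ∫ y in Set.Icc (0:ℝ) 1, f (t, x, y) := by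
  have h := integrableOn_section hf t
  rw [SI, Qset] at *
  rw [Measure.volume_eq_prod] at *
  exact setIntegral_prod _ h

lemma SI_prod_swap {f : E3 → ℝ} (hf : Continuous f) (t : ℝ) :
    SI f t = ∫ y in Set.Icc (0:ℝ) 1, ∫ x in Set.Icc (0:ℝ) 1, f (t, x, y) := by
  rw [SI_prod hf t]
  have h : Integrable (Function.uncurry (fun x y => f (t, x, y)))
      ((volume.restrict (Set.Icc (0:ℝ) 1)).prod (volume.restrict (Set.Icc (0:ℝ) 1))) := by
    rw [Measure.prod_restrict]
    have := integrableOn_section hf t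
    rw [Qset, Measure.volume_eq_prod] at this
    exact this
  exact integral_integral_swap h

lemma deriv_sec_x_eq {f : E3 → ℝ} (hf : Differentiable ℝ f) (t x y : ℝ) :
    deriv (fun s => f (t, s, y)) x = D e2 f (t, x, y) :=
  (hasDerivAt_sec_x f hf (t, x, y)).deriv

lemma deriv_sec_y_eq {f : E3 → ℝ} (hf : Differentiable ℝ f) (t x y : ℝ) :
    deriv (fun s => f (t, x, s)) y = D e3 f (t, x, y) :=
  (hasDerivAt_sec_y f hf (t, x, y)).deriv

lemma inner_x_zero {f : E3 → ℝ} (hf : Nice f) (t y : ℝ) :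
    ∫ x in Set.Icc (0:ℝ) 1, D e2 f (t, x, y) = 0 := by
  have hde : (fun x => D e2 f (t, x, y)) = deriv (fun s => f (t, s, y)) := by
    funext x; exact (deriv_sec_x_eq hf.diff t x y).symm
  rw [integral_Icc_eq_integral_Ioc, ← intervalIntegral.integral_of_le (zero_le_one' ℝ)]
  rw [hde]
  rw [intervalIntegral.integral_deriv_eq_sub (fun x _ => (hasDerivAt_sec_x f hf.diff (t, x, y)).differentiableAt) ?_]
  · have := hf.perx (t, 0, y)
    simp only [zero_add] at this
    simp [this]
  · rw [← hde]
    exact ((contDiff_D e2 f hf.smooth).continuous.comp (by fun_prop)).intervalIntegrable 0 1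

lemma inner_y_zero {f : E3 → ℝ} (hf : Nice f) (t x : ℝ) :
    ∫ y in Set.Icc (0:ℝ) 1, D e3 f (t, x, y) = 0 := by
  have hde : (fun y => D e3 f (t, x, y)) = deriv (fun s => f (t, x, s)) := by
    funext y; exact (deriv_sec_y_eq hf.diff t x y).symm
  rw [integral_Icc_eq_integral_Ioc, ← intervalIntegral.integral_of_le (zero_le_one' ℝ)]
  rw [hde]
  rw [intervalIntegral.integral_deriv_eq_sub (fun y _ => (hasDerivAt_sec_y f hf.diff (t, x, y)).differentiableAt) ?_]
  · have := hf.pery (t, x, 0)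
    simp only [zero_add] at this
    simp [this]
  · rw [← hde]
    exact ((contDiff_D e3 f hf.smooth).continuous.comp (by fun_prop)).intervalIntegrable 0 1

lemma SI_D2_zero {f : E3 → ℝ} (hf : Nice f) (t : ℝ) : SI (D e2 f) t = 0 := by
  rw [SI_prod_swap (contDiff_D e2 f hf.smooth).continuous t]
  simp [inner_x_zero hf t]

lemma SI_D3_zero {f : E3 → ℝ} (hf : Nice f) (t : ℝ) : SI (D e3 f) t = 0 := by
  rw [SI_prod (contDiff_D e3 f hf.smooth).continuous t]
  simp [inner_y_zero hf t]

lemma SI_congr {f g : E3 → ℝ} (h : ∀ p, f p = g p) (t : ℝ) : SI f t = SI g t := by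
  unfold SI; congr 1; funext q; rw [h]

lemma SI_add {f g : E3 → ℝ} (hf : Continuous f) (hg : Continuous g) (t : ℝ) :
    SI (fun p => f p + g p) t = SI f t + SI g t :=
  integral_add (integrableOn_section hf t) (integrableOn_section hg t)

lemma SI_smul (f : E3 → ℝ) (c : ℝ) (t : ℝ) :
    SI (fun p => c * f p) t = c * SI f t := by
  unfold SI; rw [← integral_const_mul]

lemma SI_neg (f : E3 → ℝ) (t : ℝ) : SI (fun p => -f p) t = - SI f t := by
  unfold SI; rw [← integral_neg]

lemma SI_sub {f g : E3 → ℝ} (hf : Continuous f) (hg : Continuous g) (t : ℝ) :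
    SI (fun p => f p - g p) t = SI f t - SI g t := by
  have := SI_add (g := fun p => -g p) hf hg.neg t
  simp only [sub_eq_add_neg]
  rw [this]
  rw [show SI (fun x => -g x) t = - SI g t from SI_neg g t]

lemma contD {f : E3 → ℝ} (hf : ContDiff ℝ (⊤:ℕ∞) f) (v : E3) : Continuous (D v f) :=
  (contDiff_D v f hf).continuous

/-- integration by parts in x -/
lemma SI_IBP2 {f g : E3 → ℝ} (hf : Nice f) (hg : Nice g) (t : ℝ) :
    SI (fun p => D e2 f p * g p) t = - SI (fun p => f p * D e2 g p) t := by
  have h0 : SI (D e2 (f * g)) t = 0 := SI_D2_zero (hf.mul hg) t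
  rw [SI_congr (fun p => congrFun (D_mul hf.diff hg.diff e2) p) t] at h0
  rw [SI_add (f := fun p => f p * D e2 g p) (g := fun p => g p * D e2 f p) ((hf.cont.mul (contD hg.smooth e2))) ((hg.cont.mul (contD hf.smooth e2)))] at h0
  have h1 : SI (fun p => g p * D e2 f p) t = SI (fun p => D e2 f p * g p) t :=
    SI_congr (fun p => mul_comm _ _) t
  linarith [h0, h1]

lemma SI_IBP3 {f g : E3 → ℝ} (hf : Nice f) (hg : Nice g) (t : ℝ) :
    SI (fun p => D e3 f p * g p) t = - SI (fun p => f p * D e3 g p) t := by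
  have h0 : SI (D e3 (f * g)) t = 0 := SI_D3_zero (hf.mul hg) t
  rw [SI_congr (fun p => congrFun (D_mul hf.diff hg.diff e3) p) t] at h0
  rw [SI_add (f := fun p => f p * D e3 g p) (g := fun p => g p * D e3 f p) ((hf.cont.mul (contD hg.smooth e3))) ((hg.cont.mul (contD hf.smooth e3)))] at h0
  have h1 : SI (fun p => g p * D e3 f p) t = SI (fun p => D e3 f p * g p) t :=
    SI_congr (fun p => mul_comm _ _) t
  linarith [h0, h1]

/-- bracket in terms of D -/
noncomputable def br (f g : E3 → ℝ) : E3 → ℝ :=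
  fun p => D e2 f p * D e3 g p - D e3 f p * D e2 g p

lemma br_cont {f g : E3 → ℝ} (hf : ContDiff ℝ (⊤:ℕ∞) f) (hg : ContDiff ℝ (⊤:ℕ∞) g) :
    Continuous (br f g) :=
  ((contD hf e2).mul (contD hg e3)).sub ((contD hf e3).mul (contD hg e2))

lemma br_smooth {f g : E3 → ℝ} (hf : ContDiff ℝ (⊤:ℕ∞) f) (hg : ContDiff ℝ (⊤:ℕ∞) g) :
    ContDiff ℝ (⊤:ℕ∞) (br f g) :=
  ((contDiff_D e2 f hf).mul (contDiff_D e3 g hg)).sub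
    ((contDiff_D e3 f hf).mul (contDiff_D e2 g hg))

lemma Nice.br {f g : E3 → ℝ} (hf : Nice f) (hg : Nice g) : Nice (br f g) :=
  (((hf.D e2).mul (hg.D e3)).sub ((hf.D e3).mul (hg.D e2)))

/-- integral of a bracket vanishes -/
lemma SI_br_zero {f g : E3 → ℝ} (hf : Nice f) (hg : Nice g) (t : ℝ) :
    SI (br f g) t = 0 := by
  have key : ∀ p, br f g p =
      D e2 (f * D e3 g) p - D e3 (f * D e2 g) p := by
    intro p
    have h1 := congrFun (D_mul hf.diff ((hg.D e3).diff) e2) p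
    have h2 := congrFun (D_mul hf.diff ((hg.D e2).diff) e3) p
    have h3 : D e2 (D e3 g) p = D e3 (D e2 g) p :=
      congrFun (D_comm e2 e3 g hg.smooth) p
    show D e2 f p * D e3 g p - D e3 f p * D e2 g p = _
    rw [h1, h2, h3]; ring
  rw [SI_congr key t]
  rw [SI_sub (f := D e2 (f * D e3 g)) (g := D e3 (f * D e2 g))
      (contD (hf.mul (hg.D e3)).smooth e2) (contD (hf.mul (hg.D e2)).smooth e3) t]
  rw [SI_D2_zero (hf.mul (hg.D e3)) t, SI_D3_zero (hf.mul (hg.D e2)) t]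
  ring

/-- cyclic-type identity: ∫ f {g, h} = - ∫ g {f, h} -/
lemma SI_cyc {f g h : E3 → ℝ} (hf : Nice f) (hg : Nice g) (hh : Nice h) (t : ℝ) :
    SI (fun p => f p * br g h p) t = - SI (fun p => g p * br f h p) t := by
  have h0 : SI (br (f * g) h) t = 0 := SI_br_zero (hf.mul hg) hh t
  have key : ∀ p, br (f * g) h p = f p * br g h p + g p * br f h p := by
    intro p
    have h1 := congrFun (D_mul hf.diff hg.diff e2) p
    have h2 := congrFun (D_mul hf.diff hg.diff e3) p
    show D e2 (f*g) p * D e3 h p - D e3 (f*g) p * D e2 h p = _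
    rw [h1, h2]
    show _ = f p * (D e2 g p * D e3 h p - D e3 g p * D e2 h p)
      + g p * (D e2 f p * D e3 h p - D e3 f p * D e2 h p)
    ring
  rw [SI_congr key t] at h0
  rw [SI_add (f := fun p => f p * br g h p) (g := fun p => g p * br f h p)
      (hf.cont.mul (br_cont hg.smooth hh.smooth))
      (hg.cont.mul (br_cont hf.smooth hh.smooth)) t] at h0
  linarith

open Metric in
lemma SI_hasDerivAt {f : E3 → ℝ} (hf : ContDiff ℝ (⊤:ℕ∞) f) (t₀ : ℝ) :
    HasDerivAt (SI f) (SI (D e1 f) t₀) t₀ := by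
  have hQm : MeasurableSet Qset := (measurableSet_Icc.prod measurableSet_Icc)
  have hQc : IsCompact Qset := isCompact_Icc.prod isCompact_Icc
  -- bound on compact set
  obtain ⟨C, hC⟩ : ∃ C, ∀ z ∈ (Set.Icc (t₀-1) (t₀+1) ×ˢ Qset : Set (ℝ × ℝ × ℝ)),
      ‖D e1 f z‖ ≤ C := by
    have hK : IsCompact (Set.Icc (t₀-1) (t₀+1) ×ˢ Qset : Set (ℝ × ℝ × ℝ)) :=
      isCompact_Icc.prod hQc
    exact hK.exists_bound_of_continuousOn (contD hf e1).continuousOn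
  have key := hasDerivAt_integral_of_dominated_loc_of_deriv_le
    (F := fun t (q : ℝ × ℝ) => f (t, q.1, q.2))
    (F' := fun t (q : ℝ × ℝ) => D e1 f (t, q.1, q.2))
    (μ := volume.restrict Qset) (x₀ := t₀) (s := Metric.ball t₀ 1) (bound := fun _ => C)
    (Metric.ball_mem_nhds t₀ one_pos)
    (Filter.Eventually.of_forall fun t =>
      ((cont_section hf.continuous t).aestronglyMeasurable))
    ((integrableOn_section hf.continuous t₀))
    ((cont_section (contD hf e1) t₀).aestronglyMeasurable)
    (ae_restrict_of_forall_mem hQm ?_)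
    (integrableOn_const hQc.measure_lt_top.ne)
    (ae_restrict_of_forall_mem hQm ?_)
  · exact key.2
  · intro q hq s hs
    apply hC
    constructor
    · have : |s - t₀| < 1 := by simpa [Real.dist_eq] using hs
      constructor <;> [linarith [abs_lt.1 this |>.1]; linarith [abs_lt.1 this |>.2]]
    · exact hq
  · intro q hq s hs
    exact hasDerivAt_sec_t f (hf.differentiable (by simp)) (s, q.1, q.2)

lemma D_add' {f g : E3 → ℝ} (hf : Differentiable ℝ f) (hg : Differentiable ℝ g) (v : E3) :
    D v (fun p => f p + g p) = fun p => D v f p + D v g p := D_add hf hg v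

lemma D_mul' {f g : E3 → ℝ} (hf : Differentiable ℝ f) (hg : Differentiable ℝ g) (v : E3) :
    D v (fun p => f p * g p) = fun p => f p * D v g p + g p * D v f p := D_mul hf hg v

lemma D_neg' {f : E3 → ℝ} (hf : Differentiable ℝ f) (v : E3) :
    D v (fun p => -(f p)) = fun p => -(D v f p) := by
  have := D_smul hf (-1) v
  have h1 : (fun p => (-1:ℝ) * f p) = fun p => -(f p) := by funext p; ring
  rw [h1] at this
  rw [this]
  funext p; ring

lemma D_half_sq {u : E3 → ℝ} (hu : Differentiable ℝ u) (v : E3) :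
    D v (fun p => (1/2 : ℝ) * (u p * u p)) = fun p => u p * D v u p := by
  have h1 := D_smul (f := fun p => u p * u p) (hu.mul hu) (1/2) v
  have h2 := D_mul' hu hu v
  rw [h1, h2]
  funext p; ring

lemma SI_zero (t : ℝ) : SI (fun _ => (0:ℝ)) t = 0 := by
  unfold SI; simp

lemma D_en (u1 u2 u3 u4 : E3 → ℝ) (h1 : Differentiable ℝ u1) (h2 : Differentiable ℝ u2)
    (h3 : Differentiable ℝ u3) (h4 : Differentiable ℝ u4) (v : E3) :
    D v (fun p => (1/2:ℝ)*(u1 p*u1 p) + ((1/2:ℝ)*(u2 p*u2 p) +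
      ((1/2:ℝ)*(u3 p*u3 p) + (1/2:ℝ)*(u4 p*u4 p)))) =
    fun p => u1 p * D v u1 p + (u2 p * D v u2 p + (u3 p * D v u3 p + u4 p * D v u4 p)) := by
  have d1 : Differentiable ℝ (fun p => (1/2:ℝ)*(u1 p*u1 p)) := by fun_prop
  have d2 : Differentiable ℝ (fun p => (1/2:ℝ)*(u2 p*u2 p)) := by fun_prop
  have d3 : Differentiable ℝ (fun p => (1/2:ℝ)*(u3 p*u3 p)) := by fun_prop
  have d4 : Differentiable ℝ (fun p => (1/2:ℝ)*(u4 p*u4 p)) := by fun_prop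
  have d34 : Differentiable ℝ (fun p => (1/2:ℝ)*(u3 p*u3 p) + (1/2:ℝ)*(u4 p*u4 p)) := by fun_prop
  have d234 : Differentiable ℝ (fun p => (1/2:ℝ)*(u2 p*u2 p) +
      ((1/2:ℝ)*(u3 p*u3 p) + (1/2:ℝ)*(u4 p*u4 p))) := by fun_prop
  have s1 : D v (fun p => (1/2:ℝ)*(u1 p*u1 p) + ((1/2:ℝ)*(u2 p*u2 p) +
      ((1/2:ℝ)*(u3 p*u3 p) + (1/2:ℝ)*(u4 p*u4 p)))) =
      fun p => D v (fun p => (1/2:ℝ)*(u1 p*u1 p)) p + D v (fun p => (1/2:ℝ)*(u2 p*u2 p) +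
      ((1/2:ℝ)*(u3 p*u3 p) + (1/2:ℝ)*(u4 p*u4 p))) p := D_add' d1 d234 v
  have s2 : D v (fun p => (1/2:ℝ)*(u2 p*u2 p) +
      ((1/2:ℝ)*(u3 p*u3 p) + (1/2:ℝ)*(u4 p*u4 p))) =
      fun p => D v (fun p => (1/2:ℝ)*(u2 p*u2 p)) p +
        D v (fun p => (1/2:ℝ)*(u3 p*u3 p) + (1/2:ℝ)*(u4 p*u4 p)) p := D_add' d2 d34 v
  have s3 : D v (fun p => (1/2:ℝ)*(u3 p*u3 p) + (1/2:ℝ)*(u4 p*u4 p)) =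
      fun p => D v (fun p => (1/2:ℝ)*(u3 p*u3 p)) p +
        D v (fun p => (1/2:ℝ)*(u4 p*u4 p)) p := D_add' d3 d4 v
  funext p
  rw [congrFun s1 p, congrFun s2 p, congrFun s3 p,
    congrFun (D_half_sq h1 v) p, congrFun (D_half_sq h2 v) p,
    congrFun (D_half_sq h3 v) p, congrFun (D_half_sq h4 v) p]

lemma jacBracket_eq_br {f g : E3 → ℝ} (hf : Differentiable ℝ f) (hg : Differentiable ℝ g) :
    jacBracket f g = br f g := by
  funext p
  unfold jacBracket br
  rw [pdx_eq f hf, pdy_eq f hf, pdx_eq g hg, pdy_eq g hg]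

lemma spatialLap_eq {f : E3 → ℝ} (hf : ContDiff ℝ (⊤:ℕ∞) f) :
    spatialLap f = fun p => D e2 (D e2 f) p + D e3 (D e3 f) p := by
  have hd : Differentiable ℝ f := hf.differentiable (by simp)
  funext p
  unfold spatialLap
  rw [pdx_eq f hd, pdy_eq f hd,
    pdx_eq (D e2 f) ((contDiff_D e2 f hf).differentiable (by simp)),
    pdy_eq (D e3 f) ((contDiff_D e3 f hf).differentiable (by simp))]

-- main computation: time derivative of energy vanishes
lemma energy_deriv_zero (ψ A ω J Atil : E3 → ℝ)
    (nψ : Nice ψ) (nA : Nice A) (nω : Nice ω) (nJ : Nice J) (nAtil : Nice Atil)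
    (hωD : ω = fun p => -(D e2 (D e2 ψ) p + D e3 (D e3 ψ) p))
    (hJD : J = fun p => -(D e2 (D e2 A) p + D e3 (D e3 A) p))
    (hE1 : ∀ p, D e1 ω p = -(br ω ψ p) - br Atil J p)
    (hE2 : ∀ p, D e1 A p = -(br Atil ψ p))
    (r : ℝ) :
    SI (D e1 (fun p => (1/2:ℝ)*(D e2 ψ p*D e2 ψ p) + ((1/2:ℝ)*(D e3 ψ p*D e3 ψ p) +
      ((1/2:ℝ)*(D e2 A p*D e2 A p) + (1/2:ℝ)*(D e3 A p*D e3 A p))))) r = 0 := by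
  have hψ := nψ.smooth
  have hA := nA.smooth
  have dψ := nψ.diff
  have dA := nA.diff
  -- pointwise formula for the derivative of the energy density
  have hD1 := D_en (D e2 ψ) (D e3 ψ) (D e2 A) (D e3 A)
    (nψ.D e2).diff (nψ.D e3).diff (nA.D e2).diff (nA.D e3).diff e1
  -- commute D e1 inward
  have c2ψ : D e1 (D e2 ψ) = D e2 (D e1 ψ) := D_comm e1 e2 ψ hψ
  have c3ψ : D e1 (D e3 ψ) = D e3 (D e1 ψ) := D_comm e1 e3 ψ hψ
  have c2A : D e1 (D e2 A) = D e2 (D e1 A) := D_comm e1 e2 A hA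
  have c3A : D e1 (D e3 A) = D e3 (D e1 A) := D_comm e1 e3 A hA
  -- split the integral into four pieces
  have cc1 : Continuous (fun p => D e2 ψ p * D e2 (D e1 ψ) p) :=
    (contD hψ e2).mul (contD (contDiff_D e1 ψ hψ) e2)
  have cc2 : Continuous (fun p => D e3 ψ p * D e3 (D e1 ψ) p) :=
    (contD hψ e3).mul (contD (contDiff_D e1 ψ hψ) e3)
  have cc3 : Continuous (fun p => D e2 A p * D e2 (D e1 A) p) :=
    (contD hA e2).mul (contD (contDiff_D e1 A hA) e2)
  have cc4 : Continuous (fun p => D e3 A p * D e3 (D e1 A) p) :=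
    (contD hA e3).mul (contD (contDiff_D e1 A hA) e3)
  have cc34 : Continuous (fun p => D e2 A p * D e2 (D e1 A) p +
      D e3 A p * D e3 (D e1 A) p) := cc3.add cc4
  have cc234 : Continuous (fun p => D e3 ψ p * D e3 (D e1 ψ) p +
      (D e2 A p * D e2 (D e1 A) p + D e3 A p * D e3 (D e1 A) p)) := cc2.add cc34
  have hsplit : SI (D e1 (fun p => (1/2:ℝ)*(D e2 ψ p*D e2 ψ p) + ((1/2:ℝ)*(D e3 ψ p*D e3 ψ p) +
      ((1/2:ℝ)*(D e2 A p*D e2 A p) + (1/2:ℝ)*(D e3 A p*D e3 A p))))) r =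
      SI (fun p => D e2 ψ p * D e2 (D e1 ψ) p) r +
      (SI (fun p => D e3 ψ p * D e3 (D e1 ψ) p) r +
      (SI (fun p => D e2 A p * D e2 (D e1 A) p) r +
       SI (fun p => D e3 A p * D e3 (D e1 A) p) r)) := by
    rw [SI_congr (g := fun p => D e2 ψ p * D e2 (D e1 ψ) p +
       (D e3 ψ p * D e3 (D e1 ψ) p +
       (D e2 A p * D e2 (D e1 A) p + D e3 A p * D e3 (D e1 A) p)))
       (fun p => by rw [congrFun hD1 p, c2ψ, c3ψ, c2A, c3A]) r]
    rw [SI_add (f := fun p => D e2 ψ p * D e2 (D e1 ψ) p)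
        (g := fun p => D e3 ψ p * D e3 (D e1 ψ) p +
          (D e2 A p * D e2 (D e1 A) p + D e3 A p * D e3 (D e1 A) p)) cc1 cc234 r]
    rw [SI_add (f := fun p => D e3 ψ p * D e3 (D e1 ψ) p)
        (g := fun p => D e2 A p * D e2 (D e1 A) p + D e3 A p * D e3 (D e1 A) p) cc2 cc34 r]
    rw [SI_add (f := fun p => D e2 A p * D e2 (D e1 A) p)
        (g := fun p => D e3 A p * D e3 (D e1 A) p) cc3 cc4 r]
  -- ψ-part: integrate by parts twice towards ψ
  have hT1 : SI (fun p => D e2 ψ p * D e2 (D e1 ψ) p) r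
      = - SI (fun p => ψ p * D e2 (D e2 (D e1 ψ)) p) r := SI_IBP2 nψ ((nψ.D e1).D e2) r
  have hT2 : SI (fun p => D e3 ψ p * D e3 (D e1 ψ) p) r
      = - SI (fun p => ψ p * D e3 (D e3 (D e1 ψ)) p) r := SI_IBP3 nψ ((nψ.D e1).D e3) r
  have k2ψ : D e2 (D e2 (D e1 ψ)) = D e1 (D e2 (D e2 ψ)) := by
    rw [show D e2 (D e1 ψ) = D e1 (D e2 ψ) from D_comm e2 e1 ψ hψ]
    exact D_comm e2 e1 (D e2 ψ) (contDiff_D e2 ψ hψ)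
  have k3ψ : D e3 (D e3 (D e1 ψ)) = D e1 (D e3 (D e3 ψ)) := by
    rw [show D e3 (D e1 ψ) = D e1 (D e3 ψ) from D_comm e3 e1 ψ hψ]
    exact D_comm e3 e1 (D e3 ψ) (contDiff_D e3 ψ hψ)
  have hcm1 : SI (fun p => ψ p * D e2 (D e2 (D e1 ψ)) p) r
      = SI (fun p => ψ p * D e1 (D e2 (D e2 ψ)) p) r :=
    SI_congr (fun p => by rw [k2ψ]) r
  have hcm2 : SI (fun p => ψ p * D e3 (D e3 (D e1 ψ)) p) r
      = SI (fun p => ψ p * D e1 (D e3 (D e3 ψ)) p) r :=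
    SI_congr (fun p => by rw [k3ψ]) r
  -- the time derivative of ω
  have hDω : ∀ p, D e1 ω p = -(D e1 (D e2 (D e2 ψ)) p + D e1 (D e3 (D e3 ψ)) p) := by
    intro p
    have h1 : D e1 (fun p => -(D e2 (D e2 ψ) p + D e3 (D e3 ψ) p))
        = fun p => -(D e1 (fun p => D e2 (D e2 ψ) p + D e3 (D e3 ψ) p) p) :=
      D_neg' (((nψ.D e2).D e2).diff.add ((nψ.D e3).D e3).diff) e1
    have h2 : D e1 (fun p => D e2 (D e2 ψ) p + D e3 (D e3 ψ) p)
        = fun p => D e1 (D e2 (D e2 ψ)) p + D e1 (D e3 (D e3 ψ)) p :=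
      D_add' ((nψ.D e2).D e2).diff ((nψ.D e3).D e3).diff e1
    rw [hωD, congrFun h1 p, congrFun h2 p]
  have cψ5 : Continuous (fun p => ψ p * D e1 (D e2 (D e2 ψ)) p) :=
    nψ.cont.mul (contD (((nψ.D e2).D e2)).smooth e1)
  have cψ6 : Continuous (fun p => ψ p * D e1 (D e3 (D e3 ψ)) p) :=
    nψ.cont.mul (contD (((nψ.D e3).D e3)).smooth e1)
  have hωsum : SI (fun p => ψ p * D e1 ω p) r
      = -(SI (fun p => ψ p * D e1 (D e2 (D e2 ψ)) p) r
        + SI (fun p => ψ p * D e1 (D e3 (D e3 ψ)) p) r) := by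
    have h1 : SI (fun p => ψ p * D e1 ω p) r
        = SI (fun p => -(ψ p * D e1 (D e2 (D e2 ψ)) p + ψ p * D e1 (D e3 (D e3 ψ)) p)) r :=
      SI_congr (fun p => by rw [hDω p]; ring) r
    rw [h1,
      show SI (fun p => -(ψ p * D e1 (D e2 (D e2 ψ)) p + ψ p * D e1 (D e3 (D e3 ψ)) p)) r
        = - SI (fun p => ψ p * D e1 (D e2 (D e2 ψ)) p + ψ p * D e1 (D e3 (D e3 ψ)) p) r from
        SI_neg _ r,
      SI_add (f := fun p => ψ p * D e1 (D e2 (D e2 ψ)) p)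
        (g := fun p => ψ p * D e1 (D e3 (D e3 ψ)) p) cψ5 cψ6 r]
  -- use equation 1
  have happly1 : SI (fun p => ψ p * D e1 ω p) r
      = - SI (fun p => ψ p * br ω ψ p) r - SI (fun p => ψ p * br Atil J p) r := by
    have h1 : SI (fun p => ψ p * D e1 ω p) r
        = SI (fun p => -(ψ p * br ω ψ p) + -(ψ p * br Atil J p)) r :=
      SI_congr (fun p => by rw [hE1 p]; ring) r
    rw [h1, SI_add (f := fun p => -(ψ p * br ω ψ p)) (g := fun p => -(ψ p * br Atil J p))
        (nψ.cont.mul (br_cont nω.smooth hψ)).neg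
        (nψ.cont.mul (br_cont nAtil.smooth nJ.smooth)).neg r,
      show SI (fun p => -(ψ p * br ω ψ p)) r = - SI (fun p => ψ p * br ω ψ p) r from SI_neg _ r,
      show SI (fun p => -(ψ p * br Atil J p)) r = - SI (fun p => ψ p * br Atil J p) r from
        SI_neg _ r]
    ring
  have hcyc1 : SI (fun p => ψ p * br ω ψ p) r = 0 := by
    have h1 := SI_cyc nψ nω nψ r
    have h2 : SI (fun p => ω p * br ψ ψ p) r = 0 := by
      rw [SI_congr (g := fun _ => (0:ℝ)) (fun p => by
        show ω p * (D e2 ψ p * D e3 ψ p - D e3 ψ p * D e2 ψ p) = 0; ring) r]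
      exact SI_zero r
    rw [h1, h2, neg_zero]
  have hcyc2 : SI (fun p => ψ p * br Atil J p) r
      = - SI (fun p => Atil p * br ψ J p) r := SI_cyc nψ nAtil nJ r
  -- A-part
  have hT3 : SI (fun p => D e2 (D e2 A) p * D e1 A p) r
      = - SI (fun p => D e2 A p * D e2 (D e1 A) p) r := SI_IBP2 (nA.D e2) (nA.D e1) r
  have hT4 : SI (fun p => D e3 (D e3 A) p * D e1 A p) r
      = - SI (fun p => D e3 A p * D e3 (D e1 A) p) r := SI_IBP3 (nA.D e3) (nA.D e1) r
  have cA5 : Continuous (fun p => D e2 (D e2 A) p * D e1 A p) :=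
    (contD ((nA.D e2)).smooth e2).mul (contD hA e1)
  have cA6 : Continuous (fun p => D e3 (D e3 A) p * D e1 A p) :=
    (contD ((nA.D e3)).smooth e3).mul (contD hA e1)
  have hJsum : SI (fun p => J p * D e1 A p) r
      = -(SI (fun p => D e2 (D e2 A) p * D e1 A p) r
        + SI (fun p => D e3 (D e3 A) p * D e1 A p) r) := by
    have h1 : SI (fun p => J p * D e1 A p) r
        = SI (fun p => -(D e2 (D e2 A) p * D e1 A p + D e3 (D e3 A) p * D e1 A p)) r :=
      SI_congr (fun p => by simp only [hJD]; ring) r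
    rw [h1,
      show SI (fun p => -(D e2 (D e2 A) p * D e1 A p + D e3 (D e3 A) p * D e1 A p)) r
        = - SI (fun p => D e2 (D e2 A) p * D e1 A p + D e3 (D e3 A) p * D e1 A p) r from
        SI_neg _ r,
      SI_add (f := fun p => D e2 (D e2 A) p * D e1 A p)
        (g := fun p => D e3 (D e3 A) p * D e1 A p) cA5 cA6 r]
  have happly2 : SI (fun p => J p * D e1 A p) r = - SI (fun p => J p * br Atil ψ p) r := by
    have h1 : SI (fun p => J p * D e1 A p) r = SI (fun p => -(J p * br Atil ψ p)) r :=
      SI_congr (fun p => by rw [hE2 p]; ring) r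
    rw [h1]
    exact SI_neg _ r
  have hcyc3 : SI (fun p => J p * br Atil ψ p) r
      = - SI (fun p => Atil p * br J ψ p) r := SI_cyc nJ nAtil nψ r
  have hanti : SI (fun p => Atil p * br J ψ p) r = - SI (fun p => Atil p * br ψ J p) r := by
    rw [SI_congr (g := fun p => -(Atil p * br ψ J p)) (fun p => by
      show Atil p * (D e2 J p * D e3 ψ p - D e3 J p * D e2 ψ p)
        = -(Atil p * (D e2 ψ p * D e3 J p - D e3 ψ p * D e2 J p)); ring) r]
    exact SI_neg _ r
  rw [hsplit]
  linarith [hT1, hT2, hT3, hT4, hcm1, hcm2, hωsum, happly1, hcyc1, hcyc2, hJsum, happly2,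
    hcyc3, hanti]

/-- For smooth, spatially `1`-periodic solutions of the modified 2D
incompressible MHD equations `∂ₜω + {ω, ψ} + {Ã, J} = 0`, `∂ₜA + {Ã, ψ} = 0`, where
`ω = −Δψ`, `J = −ΔA`, `Ã = A + θ{ψ, A}`, the energy
`t ↦ ∫ (½|∇ψ|² + ½|∇A|²)` over the unit square is constant on `ℝ`. -/
theorem statement16
    (ψ A : ℝ × ℝ × ℝ → ℝ) (θ : ℝ)
    (hψ : ContDiff ℝ (⊤ : ℕ∞) ψ) (hA : ContDiff ℝ (⊤ : ℕ∞) A)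
    (hψx : ∀ t x y : ℝ, ψ (t, x + 1, y) = ψ (t, x, y))
    (hψy : ∀ t x y : ℝ, ψ (t, x, y + 1) = ψ (t, x, y))
    (hAx : ∀ t x y : ℝ, A (t, x + 1, y) = A (t, x, y))
    (hAy : ∀ t x y : ℝ, A (t, x, y + 1) = A (t, x, y))
    (ω J Atil : ℝ × ℝ × ℝ → ℝ)
    (hω : ω = fun p => -spatialLap ψ p)
    (hJ : J = fun p => -spatialLap A p)
    (hAtil : Atil = fun p => A p + θ * jacBracket ψ A p)
    (heq1 : ∀ p : ℝ × ℝ × ℝ, pdt ω p + jacBracket ω ψ p + jacBracket Atil J p = 0)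
    (heq2 : ∀ p : ℝ × ℝ × ℝ, pdt A p + jacBracket Atil ψ p = 0) :
    ∀ s t : ℝ,
      (∫ q in Set.Icc (0 : ℝ) 1 ×ˢ Set.Icc (0 : ℝ) 1,
        ((1 / 2) * ((pdx ψ (s, q.1, q.2)) ^ 2 + (pdy ψ (s, q.1, q.2)) ^ 2) +
          (1 / 2) * ((pdx A (s, q.1, q.2)) ^ 2 + (pdy A (s, q.1, q.2)) ^ 2))) =
      (∫ q in Set.Icc (0 : ℝ) 1 ×ˢ Set.Icc (0 : ℝ) 1,
        ((1 / 2) * ((pdx ψ (t, q.1, q.2)) ^ 2 + (pdy ψ (t, q.1, q.2)) ^ 2) +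
          (1 / 2) * ((pdx A (t, q.1, q.2)) ^ 2 + (pdy A (t, q.1, q.2)) ^ 2))) := by
  have nψ : Nice ψ := ⟨hψ, fun p => hψx p.1 p.2.1 p.2.2, fun p => hψy p.1 p.2.1 p.2.2⟩
  have nA : Nice A := ⟨hA, fun p => hAx p.1 p.2.1 p.2.2, fun p => hAy p.1 p.2.1 p.2.2⟩
  have dψ := nψ.diff
  have dA := nA.diff
  -- rewrite ω, J, Atil in D-form
  have hωD : ω = fun p => -(D e2 (D e2 ψ) p + D e3 (D e3 ψ) p) := by
    rw [hω, spatialLap_eq hψ]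
  have hJD : J = fun p => -(D e2 (D e2 A) p + D e3 (D e3 A) p) := by
    rw [hJ, spatialLap_eq hA]
  have hAtilD : Atil = fun p => A p + θ * br ψ A p := by
    rw [hAtil, jacBracket_eq_br dψ dA]
  have nω : Nice ω := by
    rw [hωD]
    exact (((nψ.D e2).D e2).add ((nψ.D e3).D e3)).neg
  have nJ : Nice J := by
    rw [hJD]
    exact (((nA.D e2).D e2).add ((nA.D e3).D e3)).neg
  have nAtil : Nice Atil := by
    rw [hAtilD]
    exact nA.add ((nψ.br nA).smul θ)
  -- the equations in D-form
  have hE1 : ∀ p, D e1 ω p = -(br ω ψ p) - br Atil J p := by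
    intro p
    have h := heq1 p
    rw [jacBracket_eq_br nω.diff dψ, jacBracket_eq_br nAtil.diff nJ.diff,
      pdt_eq ω nω.diff] at h
    linarith
  have hE2 : ∀ p, D e1 A p = -(br Atil ψ p) := by
    intro p
    have h := heq2 p
    rw [jacBracket_eq_br nAtil.diff dψ, pdt_eq A dA] at h
    linarith
  intro s t
  show SI (fun p => (1/2) * ((pdx ψ p)^2 + (pdy ψ p)^2) +
      (1/2) * ((pdx A p)^2 + (pdy A p)^2)) s =
    SI (fun p => (1/2) * ((pdx ψ p)^2 + (pdy ψ p)^2) +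
      (1/2) * ((pdx A p)^2 + (pdy A p)^2)) t
  have hswap : ∀ u : ℝ, SI (fun p => (1/2) * ((pdx ψ p)^2 + (pdy ψ p)^2) +
      (1/2) * ((pdx A p)^2 + (pdy A p)^2)) u =
      SI (fun p => (1/2:ℝ)*(D e2 ψ p*D e2 ψ p) + ((1/2:ℝ)*(D e3 ψ p*D e3 ψ p) +
      ((1/2:ℝ)*(D e2 A p*D e2 A p) + (1/2:ℝ)*(D e3 A p*D e3 A p)))) u := fun u =>
    SI_congr (fun p => by
      rw [pdx_eq ψ dψ, pdy_eq ψ dψ, pdx_eq A dA, pdy_eq A dA]; ring) u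
  rw [hswap s, hswap t]
  have sm : ContDiff ℝ (⊤:ℕ∞) (fun p => (1/2:ℝ)*(D e2 ψ p*D e2 ψ p) +
      ((1/2:ℝ)*(D e3 ψ p*D e3 ψ p) +
      ((1/2:ℝ)*(D e2 A p*D e2 A p) + (1/2:ℝ)*(D e3 A p*D e3 A p)))) :=
    (contDiff_const.mul ((contDiff_D e2 ψ hψ).mul (contDiff_D e2 ψ hψ))).add
      ((contDiff_const.mul ((contDiff_D e3 ψ hψ).mul (contDiff_D e3 ψ hψ))).add
        ((contDiff_const.mul ((contDiff_D e2 A hA).mul (contDiff_D e2 A hA))).add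
          (contDiff_const.mul ((contDiff_D e3 A hA).mul (contDiff_D e3 A hA)))))
  have hder : ∀ u : ℝ, HasDerivAt
      (SI (fun p => (1/2:ℝ)*(D e2 ψ p*D e2 ψ p) + ((1/2:ℝ)*(D e3 ψ p*D e3 ψ p) +
        ((1/2:ℝ)*(D e2 A p*D e2 A p) + (1/2:ℝ)*(D e3 A p*D e3 A p)))))
      (SI (D e1 (fun p => (1/2:ℝ)*(D e2 ψ p*D e2 ψ p) + ((1/2:ℝ)*(D e3 ψ p*D e3 ψ p) +
        ((1/2:ℝ)*(D e2 A p*D e2 A p) + (1/2:ℝ)*(D e3 A p*D e3 A p))))) u) u :=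
    fun u => SI_hasDerivAt sm u
  have hz := energy_deriv_zero ψ A ω J Atil nψ nA nω nJ nAtil hωD hJD hE1 hE2
  exact is_const_of_deriv_eq_zero (fun u => (hder u).differentiableAt)
    (fun u => by rw [(hder u).deriv, hz u]) s t
end

section
/- Let ψ, B : ℝ³ → ℝ be smooth (C^∞) functions of (t, x, y), 1-periodic in x and in y, let θ ∈ ℝ, and set ω := −Δψ, ω̃ := ω + θ{ψ, B}, and B̃ := B + θ{ψ, ω}. Suppose the cross-anticipated equations for 2D incompressible MHD with magnetic field normal to the plane hold at every point: ∂_t ω + {ω̃, ψ} + {B̃, B} = 0 and ∂_t B + {B̃, ψ} = 0. Then for every t ∈ ℝ, the cross Casimir decays as: the function t ↦ ∫_{[0,1]²} ω(t, x, y) B(t, x, y) dx dy is differentiable with derivative − θ ∫_{[0,1]²} ( {ψ, B}(t, x, y)² + {ψ, ω}(t, x, y)² ) dx dy. -/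
open MeasureTheory

section basic
variable {f g : ℝ × ℝ × ℝ → ℝ}

abbrev et : ℝ × ℝ × ℝ := (1, 0, 0)
abbrev ex : ℝ × ℝ × ℝ := (0, 1, 0)
abbrev ey : ℝ × ℝ × ℝ := (0, 0, 1)

lemma curveT_hasDerivAt (p : ℝ × ℝ × ℝ) :
    HasDerivAt (fun s : ℝ => (s, p.2.1, p.2.2) : ℝ → ℝ × ℝ × ℝ) et p.1 :=
  (hasDerivAt_id _).prodMk ((hasDerivAt_const _ _).prodMk (hasDerivAt_const _ _))

lemma curveX_hasDerivAt (p : ℝ × ℝ × ℝ) :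
    HasDerivAt (fun s : ℝ => (p.1, s, p.2.2) : ℝ → ℝ × ℝ × ℝ) ex p.2.1 :=
  (hasDerivAt_const _ _).prodMk ((hasDerivAt_id _).prodMk (hasDerivAt_const _ _))

lemma curveY_hasDerivAt (p : ℝ × ℝ × ℝ) :
    HasDerivAt (fun s : ℝ => (p.1, p.2.1, s) : ℝ → ℝ × ℝ × ℝ) ey p.2.2 :=
  (hasDerivAt_const _ _).prodMk ((hasDerivAt_const _ _).prodMk (hasDerivAt_id _))

lemma hasDerivAt_T (hf : Differentiable ℝ f) (p : ℝ × ℝ × ℝ) :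
    HasDerivAt (fun s => f (s, p.2.1, p.2.2)) (fderiv ℝ f p et) p.1 := by
  have := (hf p).hasFDerivAt.comp_hasDerivAt p.1 (curveT_hasDerivAt p)
  exact this

lemma hasDerivAt_X (hf : Differentiable ℝ f) (p : ℝ × ℝ × ℝ) :
    HasDerivAt (fun s => f (p.1, s, p.2.2)) (fderiv ℝ f p ex) p.2.1 := by
  have := (hf p).hasFDerivAt.comp_hasDerivAt p.2.1 (curveX_hasDerivAt p)
  exact this

lemma hasDerivAt_Y (hf : Differentiable ℝ f) (p : ℝ × ℝ × ℝ) :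
    HasDerivAt (fun s => f (p.1, p.2.1, s)) (fderiv ℝ f p ey) p.2.2 := by
  have := (hf p).hasFDerivAt.comp_hasDerivAt p.2.2 (curveY_hasDerivAt p)
  exact this

lemma pdt_eq_s17 (hf : Differentiable ℝ f) (p : ℝ × ℝ × ℝ) : pdt f p = fderiv ℝ f p et :=
  (hasDerivAt_T hf p).deriv
lemma pdx_eq_s17 (hf : Differentiable ℝ f) (p : ℝ × ℝ × ℝ) : pdx f p = fderiv ℝ f p ex :=
  (hasDerivAt_X hf p).deriv
lemma pdy_eq_s17 (hf : Differentiable ℝ f) (p : ℝ × ℝ × ℝ) : pdy f p = fderiv ℝ f p ey :=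
  (hasDerivAt_Y hf p).deriv

lemma hasDerivAt_pdt (hf : Differentiable ℝ f) (p : ℝ × ℝ × ℝ) :
    HasDerivAt (fun s => f (s, p.2.1, p.2.2)) (pdt f p) p.1 := by
  rw [pdt_eq_s17 hf]; exact hasDerivAt_T hf p
lemma hasDerivAt_pdx (hf : Differentiable ℝ f) (p : ℝ × ℝ × ℝ) :
    HasDerivAt (fun s => f (p.1, s, p.2.2)) (pdx f p) p.2.1 := by
  rw [pdx_eq_s17 hf]; exact hasDerivAt_X hf p
lemma hasDerivAt_pdy (hf : Differentiable ℝ f) (p : ℝ × ℝ × ℝ) :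
    HasDerivAt (fun s => f (p.1, p.2.1, s)) (pdy f p) p.2.2 := by
  rw [pdy_eq_s17 hf]; exact hasDerivAt_Y hf p

lemma contDiff_pdt (hf : ContDiff ℝ (⊤ : ℕ∞) f) : ContDiff ℝ (⊤ : ℕ∞) (pdt f) := by
  have : pdt f = fun p => fderiv ℝ f p et :=
    funext fun p => pdt_eq_s17 (hf.differentiable (by simp)) p
  rw [this]
  exact (hf.fderiv_right (le_refl _)).clm_apply contDiff_const

lemma contDiff_pdx (hf : ContDiff ℝ (⊤ : ℕ∞) f) : ContDiff ℝ (⊤ : ℕ∞) (pdx f) := by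
  have : pdx f = fun p => fderiv ℝ f p ex :=
    funext fun p => pdx_eq_s17 (hf.differentiable (by simp)) p
  rw [this]
  exact (hf.fderiv_right (le_refl _)).clm_apply contDiff_const

lemma contDiff_pdy (hf : ContDiff ℝ (⊤ : ℕ∞) f) : ContDiff ℝ (⊤ : ℕ∞) (pdy f) := by
  have : pdy f = fun p => fderiv ℝ f p ey :=
    funext fun p => pdy_eq_s17 (hf.differentiable (by simp)) p
  rw [this]
  exact (hf.fderiv_right (le_refl _)).clm_apply contDiff_const

lemma contDiff_jacBracket (hf : ContDiff ℝ (⊤ : ℕ∞) f) (hg : ContDiff ℝ (⊤ : ℕ∞) g) :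
    ContDiff ℝ (⊤ : ℕ∞) (jacBracket f g) :=
  ((contDiff_pdx hf).mul (contDiff_pdy hg)).sub ((contDiff_pdy hf).mul (contDiff_pdx hg))
end basic

section arith
variable {f g : ℝ × ℝ × ℝ → ℝ} {c : ℝ}

lemma pdx_add (hf : Differentiable ℝ f) (hg : Differentiable ℝ g) (p : ℝ × ℝ × ℝ) :
    pdx (fun q => f q + g q) p = pdx f p + pdx g p :=
  ((hasDerivAt_pdx hf p).add (hasDerivAt_pdx hg p)).deriv

lemma pdy_add (hf : Differentiable ℝ f) (hg : Differentiable ℝ g) (p : ℝ × ℝ × ℝ) :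
    pdy (fun q => f q + g q) p = pdy f p + pdy g p :=
  ((hasDerivAt_pdy hf p).add (hasDerivAt_pdy hg p)).deriv

lemma pdt_add (hf : Differentiable ℝ f) (hg : Differentiable ℝ g) (p : ℝ × ℝ × ℝ) :
    pdt (fun q => f q + g q) p = pdt f p + pdt g p :=
  ((hasDerivAt_pdt hf p).add (hasDerivAt_pdt hg p)).deriv

lemma pdx_mul (hf : Differentiable ℝ f) (hg : Differentiable ℝ g) (p : ℝ × ℝ × ℝ) :
    pdx (fun q => f q * g q) p = pdx f p * g p + f p * pdx g p := by
  have := ((hasDerivAt_pdx hf p).mul (hasDerivAt_pdx hg p)).deriv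
  exact this

lemma pdy_mul (hf : Differentiable ℝ f) (hg : Differentiable ℝ g) (p : ℝ × ℝ × ℝ) :
    pdy (fun q => f q * g q) p = pdy f p * g p + f p * pdy g p := by
  have := ((hasDerivAt_pdy hf p).mul (hasDerivAt_pdy hg p)).deriv
  exact this

lemma pdt_mul (hf : Differentiable ℝ f) (hg : Differentiable ℝ g) (p : ℝ × ℝ × ℝ) :
    pdt (fun q => f q * g q) p = pdt f p * g p + f p * pdt g p := by
  have := ((hasDerivAt_pdt hf p).mul (hasDerivAt_pdt hg p)).deriv
  exact this

lemma pdx_const_mul (hf : Differentiable ℝ f) (c : ℝ) (p : ℝ × ℝ × ℝ) :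
    pdx (fun q => c * f q) p = c * pdx f p :=
  ((hasDerivAt_pdx hf p).const_mul c).deriv

lemma pdy_const_mul (hf : Differentiable ℝ f) (c : ℝ) (p : ℝ × ℝ × ℝ) :
    pdy (fun q => c * f q) p = c * pdy f p :=
  ((hasDerivAt_pdy hf p).const_mul c).deriv

lemma pdx_neg (hf : Differentiable ℝ f) (p : ℝ × ℝ × ℝ) :
    pdx (fun q => -f q) p = -pdx f p :=
  (hasDerivAt_pdx hf p).neg.deriv

lemma pdy_neg (hf : Differentiable ℝ f) (p : ℝ × ℝ × ℝ) :
    pdy (fun q => -f q) p = -pdy f p :=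
  (hasDerivAt_pdy hf p).neg.deriv

/-- Clairaut / symmetry of second derivatives. -/
lemma pdx_pdy_comm (hf : ContDiff ℝ (⊤ : ℕ∞) f) (p : ℝ × ℝ × ℝ) :
    pdx (pdy f) p = pdy (pdx f) p := by
  have hd : Differentiable ℝ f := hf.differentiable (by simp)
  have hd' : Differentiable ℝ (fderiv ℝ f) :=
    (hf.fderiv_right (m := (⊤:ℕ∞)) (by simp)).differentiable (by simp)
  set f'' := fderiv ℝ (fderiv ℝ f) p with hf''
  have hsymm : ∀ v w, f'' v w = f'' w v :=
    second_derivative_symmetric (fun y => (hd y).hasFDerivAt) (hd' p).hasFDerivAt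
  have hkey : ∀ v : ℝ × ℝ × ℝ,
      HasFDerivAt (fun q => fderiv ℝ f q v) ((ContinuousLinearMap.apply ℝ ℝ v).comp f'') p :=
    fun v => ((ContinuousLinearMap.apply ℝ ℝ v).hasFDerivAt).comp p (hd' p).hasFDerivAt
  have hpy : pdy f = fun q => fderiv ℝ f q ey := funext fun q => pdy_eq_s17 hd q
  have hpx : pdx f = fun q => fderiv ℝ f q ex := funext fun q => pdx_eq_s17 hd q
  have h1 : pdx (pdy f) p = f'' ex ey := by
    rw [pdx_eq_s17 ((contDiff_pdy hf).differentiable (by simp)) p, hpy,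
      (hkey ey).fderiv]
    rfl
  have h2 : pdy (pdx f) p = f'' ey ex := by
    rw [pdy_eq_s17 ((contDiff_pdx hf).differentiable (by simp)) p, hpx,
      (hkey ex).fderiv]
    rfl
  rw [h1, h2, hsymm]
end arith

section periodic
variable {f g : ℝ × ℝ × ℝ → ℝ}

/-- Periodic in x and y. -/
def Per (f : ℝ × ℝ × ℝ → ℝ) : Prop :=
  (∀ t x y : ℝ, f (t, x + 1, y) = f (t, x, y)) ∧ (∀ t x y : ℝ, f (t, x, y + 1) = f (t, x, y))

lemma Per.mul (hf : Per f) (hg : Per g) : Per (fun p => f p * g p) :=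
  ⟨fun t x y => by simp only [hf.1, hg.1], fun t x y => by simp only [hf.2, hg.2]⟩

lemma Per.add (hf : Per f) (hg : Per g) : Per (fun p => f p + g p) :=
  ⟨fun t x y => by simp only [hf.1, hg.1], fun t x y => by simp only [hf.2, hg.2]⟩

lemma Per.const_mul (hf : Per f) (c : ℝ) : Per (fun p => c * f p) :=
  ⟨fun t x y => by simp only [hf.1], fun t x y => by simp only [hf.2]⟩

lemma Per.neg (hf : Per f) : Per (fun p => -f p) :=
  ⟨fun t x y => by simp only [hf.1], fun t x y => by simp only [hf.2]⟩

lemma Per.pdx (hf : Per f) : Per (pdx f) := by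
  constructor
  · intro t x y
    show deriv (fun s => f (t, s, y)) (x + 1) = deriv (fun s => f (t, s, y)) x
    rw [← deriv_comp_add_const (f := fun s => f (t, s, y)) (a := 1)]
    congr 1
    funext s
    exact hf.1 t s y
  · intro t x y
    show deriv (fun s => f (t, s, y + 1)) x = deriv (fun s => f (t, s, y)) x
    congr 1
    funext s
    exact hf.2 t s y

lemma Per.pdy (hf : Per f) : Per (pdy f) := by
  constructor
  · intro t x y
    show deriv (fun s => f (t, x + 1, s)) y = deriv (fun s => f (t, x, s)) y
    congr 1
    funext s
    exact hf.1 t x s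
  · intro t x y
    show deriv (fun s => f (t, x, s)) (y + 1) = deriv (fun s => f (t, x, s)) y
    rw [← deriv_comp_add_const (f := fun s => f (t, x, s)) (a := 1)]
    congr 1
    funext s
    exact hf.2 t x s

lemma Per.pdt (hf : Per f) : Per (_root_.pdt f) := by
  constructor
  · intro t x y
    show deriv (fun s => f (s, x + 1, y)) t = deriv (fun s => f (s, x, y)) t
    congr 1
    funext s
    exact hf.1 s x y
  · intro t x y
    show deriv (fun s => f (s, x, y + 1)) t = deriv (fun s => f (s, x, y)) t
    congr 1
    funext s
    exact hf.2 s x y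

lemma Per.jacBracket (hf : Per f) (hg : Per g) : Per (_root_.jacBracket f g) := by
  have h1 := (hf.pdx.mul hg.pdy)
  have h2 := (hf.pdy.mul hg.pdx)
  exact ⟨fun t x y => by
      simp only [_root_.jacBracket, hf.pdx.1, hg.pdy.1, hf.pdy.1, hg.pdx.1],
    fun t x y => by
      simp only [_root_.jacBracket, hf.pdx.2, hg.pdy.2, hf.pdy.2, hg.pdx.2]⟩
end periodic

section vanish
variable {f g w : ℝ × ℝ × ℝ → ℝ}

open Set in
lemma cube_compact : IsCompact (Icc (0:ℝ) 1 ×ˢ Icc (0:ℝ) 1) :=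
  isCompact_Icc.prod isCompact_Icc

lemma cont_slice (hw : Continuous w) (t : ℝ) :
    Continuous (fun q : ℝ × ℝ => w (t, q.1, q.2)) := by fun_prop

lemma integrableOn_slice (hw : Continuous w) (t : ℝ) :
    IntegrableOn (fun q : ℝ × ℝ => w (t, q.1, q.2))
      (Set.Icc (0:ℝ) 1 ×ˢ Set.Icc (0:ℝ) 1) volume :=
  (cont_slice hw t).continuousOn.integrableOn_compact cube_compact

lemma inner_pdx_zero (hw : ContDiff ℝ (⊤ : ℕ∞) w) (hper : Per w) (t y : ℝ) :
    ∫ x in Set.Icc (0:ℝ) 1, pdx w (t, x, y) = 0 := by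
  have hd : Differentiable ℝ w := hw.differentiable (by simp)
  have hcont : Continuous fun x => pdx w (t, x, y) := by
    have := (contDiff_pdx hw).continuous
    fun_prop
  rw [MeasureTheory.integral_Icc_eq_integral_Ioc,
    ← intervalIntegral.integral_of_le zero_le_one,
    intervalIntegral.integral_eq_sub_of_hasDerivAt
      (f := fun x => w (t, x, y)) (fun x _ => hasDerivAt_pdx hd (t, x, y))
      (hcont.intervalIntegrable 0 1)]
  have := hper.1 t 0 y
  simp only [zero_add] at this
  rw [this, sub_self]

lemma inner_pdy_zero (hw : ContDiff ℝ (⊤ : ℕ∞) w) (hper : Per w) (t x : ℝ) :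
    ∫ y in Set.Icc (0:ℝ) 1, pdy w (t, x, y) = 0 := by
  have hd : Differentiable ℝ w := hw.differentiable (by simp)
  have hcont : Continuous fun y => pdy w (t, x, y) := by
    have := (contDiff_pdy hw).continuous
    fun_prop
  rw [MeasureTheory.integral_Icc_eq_integral_Ioc,
    ← intervalIntegral.integral_of_le zero_le_one,
    intervalIntegral.integral_eq_sub_of_hasDerivAt
      (f := fun y => w (t, x, y)) (fun y _ => hasDerivAt_pdy hd (t, x, y))
      (hcont.intervalIntegrable 0 1)]
  have := hper.2 t x 0
  simp only [zero_add] at this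
  rw [this, sub_self]

lemma integral_pdx_zero (hw : ContDiff ℝ (⊤ : ℕ∞) w) (hper : Per w) (t : ℝ) :
    ∫ q in Set.Icc (0:ℝ) 1 ×ˢ Set.Icc (0:ℝ) 1, pdx w (t, q.1, q.2) = 0 := by
  have hint : IntegrableOn (fun q : ℝ × ℝ => pdx w (t, q.1, q.2))
      (Set.Icc (0:ℝ) 1 ×ˢ Set.Icc (0:ℝ) 1) volume :=
    integrableOn_slice (contDiff_pdx hw).continuous t
  rw [show (volume : Measure (ℝ × ℝ)) = volume.prod volume from Measure.volume_eq_prod ℝ ℝ] at hint ⊢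
  rw [MeasureTheory.setIntegral_prod _ hint]
  have hswap :
      ∫ x in Set.Icc (0:ℝ) 1, ∫ y in Set.Icc (0:ℝ) 1, pdx w (t, x, y)
        = ∫ y in Set.Icc (0:ℝ) 1, ∫ x in Set.Icc (0:ℝ) 1, pdx w (t, x, y) := by
    apply MeasureTheory.integral_integral_swap
    rw [Measure.prod_restrict]
    exact hint
  rw [hswap]
  simp [inner_pdx_zero hw hper t]

lemma integral_pdy_zero (hw : ContDiff ℝ (⊤ : ℕ∞) w) (hper : Per w) (t : ℝ) :
    ∫ q in Set.Icc (0:ℝ) 1 ×ˢ Set.Icc (0:ℝ) 1, pdy w (t, q.1, q.2) = 0 := by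
  have hint : IntegrableOn (fun q : ℝ × ℝ => pdy w (t, q.1, q.2))
      (Set.Icc (0:ℝ) 1 ×ˢ Set.Icc (0:ℝ) 1) volume :=
    integrableOn_slice (contDiff_pdy hw).continuous t
  rw [show (volume : Measure (ℝ × ℝ)) = volume.prod volume from Measure.volume_eq_prod ℝ ℝ] at hint ⊢
  rw [MeasureTheory.setIntegral_prod _ hint]
  simp [inner_pdy_zero hw hper t]

/-- Key lemma: the integral of a Jacobian bracket of smooth periodic functions over the
unit cell vanishes. -/
lemma integral_jacBracket_zero (hf : ContDiff ℝ (⊤ : ℕ∞) f) (hg : ContDiff ℝ (⊤ : ℕ∞) g)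
    (hfp : Per f) (hgp : Per g) (t : ℝ) :
    ∫ q in Set.Icc (0:ℝ) 1 ×ˢ Set.Icc (0:ℝ) 1, jacBracket f g (t, q.1, q.2) = 0 := by
  have hfd : Differentiable ℝ f := hf.differentiable (by simp)
  have hgd : Differentiable ℝ g := hg.differentiable (by simp)
  have hu : ContDiff ℝ (⊤ : ℕ∞) (fun q => f q * pdy g q) := hf.mul (contDiff_pdy hg)
  have hv : ContDiff ℝ (⊤ : ℕ∞) (fun q => f q * pdx g q) := hf.mul (contDiff_pdx hg)
  have hpt : ∀ p, jacBracket f g p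
      = pdx (fun q => f q * pdy g q) p - pdy (fun q => f q * pdx g q) p := by
    intro p
    rw [pdx_mul hfd ((contDiff_pdy hg).differentiable (by simp)) p,
      pdy_mul hfd ((contDiff_pdx hg).differentiable (by simp)) p,
      pdx_pdy_comm hg p]
    unfold jacBracket
    ring
  have h1 : ∫ q in Set.Icc (0:ℝ) 1 ×ˢ Set.Icc (0:ℝ) 1,
      pdx (fun q => f q * pdy g q) (t, q.1, q.2) = 0 :=
    integral_pdx_zero hu (hfp.mul hgp.pdy) t
  have h2 : ∫ q in Set.Icc (0:ℝ) 1 ×ˢ Set.Icc (0:ℝ) 1,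
      pdy (fun q => f q * pdx g q) (t, q.1, q.2) = 0 :=
    integral_pdy_zero hv (hfp.mul hgp.pdx) t
  calc ∫ q in Set.Icc (0:ℝ) 1 ×ˢ Set.Icc (0:ℝ) 1, jacBracket f g (t, q.1, q.2)
      = ∫ q in Set.Icc (0:ℝ) 1 ×ˢ Set.Icc (0:ℝ) 1,
          (pdx (fun q => f q * pdy g q) (t, q.1, q.2)
            - pdy (fun q => f q * pdx g q) (t, q.1, q.2)) := by
        congr 1; funext q; exact hpt _
    _ = 0 := by
        rw [MeasureTheory.integral_sub
          (integrableOn_slice (contDiff_pdx hu).continuous t)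
          (integrableOn_slice (contDiff_pdy hv).continuous t), h1, h2, sub_self]
end vanish

section diffint
variable {w : ℝ × ℝ × ℝ → ℝ}

open Metric in
lemma hasDerivAt_integral_cube (hw : ContDiff ℝ (⊤ : ℕ∞) w) (t : ℝ) :
    HasDerivAt (fun s => ∫ q in Set.Icc (0:ℝ) 1 ×ˢ Set.Icc (0:ℝ) 1, w (s, q.1, q.2))
      (∫ q in Set.Icc (0:ℝ) 1 ×ˢ Set.Icc (0:ℝ) 1, pdt w (t, q.1, q.2)) t := by
  have hd : Differentiable ℝ w := hw.differentiable (by simp)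
  set cube : Set (ℝ × ℝ) := Set.Icc (0:ℝ) 1 ×ˢ Set.Icc (0:ℝ) 1 with hcube
  set μ : Measure (ℝ × ℝ) := volume.restrict cube with hμ
  -- bound on the compact set
  have hK : IsCompact ((Set.Icc (t-1) (t+1)) ×ˢ cube) := isCompact_Icc.prod cube_compact
  have hcont : Continuous (pdt w) := (contDiff_pdt hw).continuous
  obtain ⟨C, hC⟩ : ∃ C, ∀ p ∈ (Set.Icc (t-1) (t+1)) ×ˢ cube, ‖pdt w (p.1, p.2.1, p.2.2)‖ ≤ C := by
    rcases hK.exists_bound_of_continuousOn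
      (f := fun p : ℝ × (ℝ × ℝ) => pdt w (p.1, p.2.1, p.2.2)) (by fun_prop) with ⟨C, hC⟩
    exact ⟨C, hC⟩
  have main := hasDerivAt_integral_of_dominated_loc_of_deriv_le
    (F := fun s (q : ℝ × ℝ) => w (s, q.1, q.2))
    (F' := fun s (q : ℝ × ℝ) => pdt w (s, q.1, q.2))
    (μ := μ) (x₀ := t) (bound := fun _ => C) (s := Metric.ball t 1) (Metric.ball_mem_nhds t one_pos)
    (Filter.Eventually.of_forall fun s => (cont_slice hw.continuous s).aestronglyMeasurable)
    ((integrableOn_slice hw.continuous t))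
    ((cont_slice hcont t).aestronglyMeasurable)
    (((ae_restrict_mem (measurableSet_Icc.prod measurableSet_Icc)).mono
      fun q hq s hs => ?_))
    (MeasureTheory.integrableOn_const cube_compact.measure_lt_top.ne)
    (Filter.Eventually.of_forall fun q => fun s _ => hasDerivAt_pdt hd (s, q.1, q.2))
  · exact main.2
  · have hs' : s ∈ Set.Icc (t-1) (t+1) := by
      rcases Real.ball_eq_Ioo t 1 ▸ hs with ⟨h1, h2⟩
      constructor <;> [linarith; linarith]
    exact hC (s, q) ⟨hs', hq⟩
end diffint

section bracketalg
variable {f g h : ℝ × ℝ × ℝ → ℝ} {c : ℝ}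

lemma jacBracket_fst_add (hf : Differentiable ℝ f) (hg : Differentiable ℝ g)
    (h : ℝ × ℝ × ℝ → ℝ) (p : ℝ × ℝ × ℝ) :
    jacBracket (fun q => f q + g q) h p = jacBracket f h p + jacBracket g h p := by
  unfold jacBracket
  rw [pdx_add hf hg p, pdy_add hf hg p]
  ring

lemma jacBracket_fst_const_mul (hf : Differentiable ℝ f) (c : ℝ)
    (h : ℝ × ℝ × ℝ → ℝ) (p : ℝ × ℝ × ℝ) :
    jacBracket (fun q => c * f q) h p = c * jacBracket f h p := by
  unfold jacBracket
  rw [pdx_const_mul hf c p, pdy_const_mul hf c p]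
  ring

lemma jacBracket_fst_mul (hf : Differentiable ℝ f) (hg : Differentiable ℝ g)
    (h : ℝ × ℝ × ℝ → ℝ) (p : ℝ × ℝ × ℝ) :
    jacBracket (fun q => f q * g q) h p = jacBracket f h p * g p + f p * jacBracket g h p := by
  unfold jacBracket
  rw [pdx_mul hf hg p, pdy_mul hf hg p]
  ring

lemma jacBracket_fst_neg (hf : Differentiable ℝ f)
    (h : ℝ × ℝ × ℝ → ℝ) (p : ℝ × ℝ × ℝ) :
    jacBracket (fun q => -f q) h p = -jacBracket f h p := by
  unfold jacBracket
  rw [pdx_neg hf p, pdy_neg hf p]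
  ring

lemma jacBracket_self (f : ℝ × ℝ × ℝ → ℝ) (p : ℝ × ℝ × ℝ) : jacBracket f f p = 0 := by
  unfold jacBracket; ring

lemma jacBracket_antisymm (f g : ℝ × ℝ × ℝ → ℝ) (p : ℝ × ℝ × ℝ) :
    jacBracket f g p = -jacBracket g f p := by
  unfold jacBracket; ring
end bracketalg


/-- For smooth, spatially `1`-periodic solutions of the cross-anticipated
equations of 2D incompressible MHD with `𝐁 = B ẑ` normal to the plane:
`∂ₜω + {ω̃, ψ} + {B̃, B} = 0`, `∂ₜB + {B̃, ψ} = 0`, where `ω = −Δψ`, `ω̃ = ω + θ{ψ, B}`,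
`B̃ = B + θ{ψ, ω}`, the cross Casimir `∫ ω B` decays at the rate
`d/dt ∫ ω B = −θ ∫ ({ψ, B}² + {ψ, ω}²)` (integrals over the unit square). -/
theorem statement17
    (ψ B : ℝ × ℝ × ℝ → ℝ) (θ : ℝ)
    (hψ : ContDiff ℝ (⊤ : ℕ∞) ψ) (hB : ContDiff ℝ (⊤ : ℕ∞) B)
    (hψx : ∀ t x y : ℝ, ψ (t, x + 1, y) = ψ (t, x, y))
    (hψy : ∀ t x y : ℝ, ψ (t, x, y + 1) = ψ (t, x, y))
    (hBx : ∀ t x y : ℝ, B (t, x + 1, y) = B (t, x, y))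
    (hBy : ∀ t x y : ℝ, B (t, x, y + 1) = B (t, x, y))
    (ω ωtil Btil : ℝ × ℝ × ℝ → ℝ)
    (hω : ω = fun p => -spatialLap ψ p)
    (hωtil : ωtil = fun p => ω p + θ * jacBracket ψ B p)
    (hBtil : Btil = fun p => B p + θ * jacBracket ψ ω p)
    (heq1 : ∀ p : ℝ × ℝ × ℝ, pdt ω p + jacBracket ωtil ψ p + jacBracket Btil B p = 0)
    (heq2 : ∀ p : ℝ × ℝ × ℝ, pdt B p + jacBracket Btil ψ p = 0) :
    ∀ t : ℝ,
      HasDerivAt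
        (fun s => ∫ q in Set.Icc (0 : ℝ) 1 ×ˢ Set.Icc (0 : ℝ) 1,
          ω (s, q.1, q.2) * B (s, q.1, q.2))
        (-(θ * ∫ q in Set.Icc (0 : ℝ) 1 ×ˢ Set.Icc (0 : ℝ) 1,
            ((jacBracket ψ B (t, q.1, q.2)) ^ 2 + (jacBracket ψ ω (t, q.1, q.2)) ^ 2))) t := by
  intro t
  -- smoothness
  have hωC : ContDiff ℝ (⊤ : ℕ∞) ω := by
    rw [hω]
    exact ((contDiff_pdx (contDiff_pdx hψ)).add (contDiff_pdy (contDiff_pdy hψ))).neg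
  have haC : ContDiff ℝ (⊤ : ℕ∞) (jacBracket ψ B) := contDiff_jacBracket hψ hB
  have hbC : ContDiff ℝ (⊤ : ℕ∞) (jacBracket ψ ω) := contDiff_jacBracket hψ hωC
  have hψd : Differentiable ℝ ψ := hψ.differentiable (by simp)
  have hBd : Differentiable ℝ B := hB.differentiable (by simp)
  have hωd : Differentiable ℝ ω := hωC.differentiable (by simp)
  have had : Differentiable ℝ (jacBracket ψ B) := haC.differentiable (by simp)
  have hbd : Differentiable ℝ (jacBracket ψ ω) := hbC.differentiable (by simp)
  -- periodicity
  have hψP : Per ψ := ⟨hψx, hψy⟩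
  have hBP : Per B := ⟨hBx, hBy⟩
  have hωP : Per ω := by
    rw [hω]
    exact ((hψP.pdx.pdx).add (hψP.pdy.pdy)).neg
  have haP : Per (jacBracket ψ B) := hψP.jacBracket hBP
  have hbP : Per (jacBracket ψ ω) := hψP.jacBracket hωP
  -- the exact terms
  have hEC : ContDiff ℝ (⊤ : ℕ∞)
      (fun q => -(ω q * B q + θ * (jacBracket ψ B q * B q) + θ * (jacBracket ψ ω q * ω q))) :=
    (((hωC.mul hB).add (contDiff_const.mul (haC.mul hB))).add
      (contDiff_const.mul (hbC.mul hωC))).neg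
  have hEbC : ContDiff ℝ (⊤ : ℕ∞) (fun q => -(θ * (jacBracket ψ ω q * B q))) :=
    (contDiff_const.mul (hbC.mul hB)).neg
  have hEP : Per
      (fun q => -(ω q * B q + θ * (jacBracket ψ B q * B q) + θ * (jacBracket ψ ω q * ω q))) :=
    (((hωP.mul hBP).add ((haP.mul hBP).const_mul θ)).add ((hbP.mul hωP).const_mul θ)).neg
  have hEbP : Per (fun q => -(θ * (jacBracket ψ ω q * B q))) :=
    ((hbP.mul hBP).const_mul θ).neg
  -- pointwise identity
  have key : ∀ p : ℝ × ℝ × ℝ, pdt (fun q => ω q * B q) p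
      = (-θ) * ((jacBracket ψ B p) ^ 2 + (jacBracket ψ ω p) ^ 2)
        + (jacBracket
            (fun q => -(ω q * B q + θ * (jacBracket ψ B q * B q)
              + θ * (jacBracket ψ ω q * ω q))) ψ p
          + jacBracket (fun q => -(θ * (jacBracket ψ ω q * B q))) B p) := by
    intro p
    have h0 : pdt (fun q => ω q * B q) p = pdt ω p * B p + ω p * pdt B p := pdt_mul hωd hBd p
    have h1 : pdt ω p = -(jacBracket ωtil ψ p + jacBracket Btil B p) := by
      have := heq1 p; linarith
    have h2 : pdt B p = -jacBracket Btil ψ p := by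
      have := heq2 p; linarith
    have e1 : jacBracket ωtil ψ p
        = jacBracket ω ψ p + θ * jacBracket (jacBracket ψ B) ψ p := by
      have s : jacBracket ωtil ψ p
          = jacBracket ω ψ p + jacBracket (fun q => θ * jacBracket ψ B q) ψ p := by
        rw [hωtil]; exact jacBracket_fst_add hωd (had.const_mul θ) ψ p
      rw [s, jacBracket_fst_const_mul had θ ψ p]
    have e2 : jacBracket Btil B p = θ * jacBracket (jacBracket ψ ω) B p := by
      have s : jacBracket Btil B p
          = jacBracket B B p + jacBracket (fun q => θ * jacBracket ψ ω q) B p := by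
        rw [hBtil]; exact jacBracket_fst_add hBd (hbd.const_mul θ) B p
      rw [s, jacBracket_fst_const_mul hbd θ B p, jacBracket_self, zero_add]
    have e3 : jacBracket Btil ψ p
        = jacBracket B ψ p + θ * jacBracket (jacBracket ψ ω) ψ p := by
      have s : jacBracket Btil ψ p
          = jacBracket B ψ p + jacBracket (fun q => θ * jacBracket ψ ω q) ψ p := by
        rw [hBtil]; exact jacBracket_fst_add hBd (hbd.const_mul θ) ψ p
      rw [s, jacBracket_fst_const_mul hbd θ ψ p]
    -- expansion of the exact terms
    have e4 : jacBracket
        (fun q => -(ω q * B q + θ * (jacBracket ψ B q * B q)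
          + θ * (jacBracket ψ ω q * ω q))) ψ p
        = -((jacBracket ω ψ p * B p + ω p * jacBracket B ψ p)
          + θ * (jacBracket (jacBracket ψ B) ψ p * B p
              + jacBracket ψ B p * jacBracket B ψ p)
          + θ * (jacBracket (jacBracket ψ ω) ψ p * ω p
              + jacBracket ψ ω p * jacBracket ω ψ p)) := by
      have s1 : jacBracket
          (fun q => -(ω q * B q + θ * (jacBracket ψ B q * B q)
            + θ * (jacBracket ψ ω q * ω q))) ψ p
          = -jacBracket (fun q => ω q * B q + θ * (jacBracket ψ B q * B q)
            + θ * (jacBracket ψ ω q * ω q)) ψ p :=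
        jacBracket_fst_neg (((hωd.mul hBd).add ((had.mul hBd).const_mul θ)).add
          ((hbd.mul hωd).const_mul θ)) ψ p
      have s2 : jacBracket (fun q => ω q * B q + θ * (jacBracket ψ B q * B q)
            + θ * (jacBracket ψ ω q * ω q)) ψ p
          = jacBracket (fun q => ω q * B q + θ * (jacBracket ψ B q * B q)) ψ p
            + jacBracket (fun q => θ * (jacBracket ψ ω q * ω q)) ψ p :=
        jacBracket_fst_add ((hωd.mul hBd).add ((had.mul hBd).const_mul θ))
          ((hbd.mul hωd).const_mul θ) ψ p
      have s3 : jacBracket (fun q => ω q * B q + θ * (jacBracket ψ B q * B q)) ψ p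
          = jacBracket (fun q => ω q * B q) ψ p
            + jacBracket (fun q => θ * (jacBracket ψ B q * B q)) ψ p :=
        jacBracket_fst_add (hωd.mul hBd) ((had.mul hBd).const_mul θ) ψ p
      have s4 : jacBracket (fun q => ω q * B q) ψ p
          = jacBracket ω ψ p * B p + ω p * jacBracket B ψ p :=
        jacBracket_fst_mul hωd hBd ψ p
      have s5 : jacBracket (fun q => θ * (jacBracket ψ B q * B q)) ψ p
          = θ * jacBracket (fun q => jacBracket ψ B q * B q) ψ p :=
        jacBracket_fst_const_mul (had.mul hBd) θ ψ p
      have s6 : jacBracket (fun q => jacBracket ψ B q * B q) ψ p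
          = jacBracket (jacBracket ψ B) ψ p * B p + jacBracket ψ B p * jacBracket B ψ p :=
        jacBracket_fst_mul had hBd ψ p
      have s7 : jacBracket (fun q => θ * (jacBracket ψ ω q * ω q)) ψ p
          = θ * jacBracket (fun q => jacBracket ψ ω q * ω q) ψ p :=
        jacBracket_fst_const_mul (hbd.mul hωd) θ ψ p
      have s8 : jacBracket (fun q => jacBracket ψ ω q * ω q) ψ p
          = jacBracket (jacBracket ψ ω) ψ p * ω p + jacBracket ψ ω p * jacBracket ω ψ p :=
        jacBracket_fst_mul hbd hωd ψ p
      rw [s1, s2, s3, s4, s5, s6, s7, s8]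
    have e5 : jacBracket (fun q => -(θ * (jacBracket ψ ω q * B q))) B p
        = -(θ * (jacBracket (jacBracket ψ ω) B p * B p)) := by
      have s1 : jacBracket (fun q => -(θ * (jacBracket ψ ω q * B q))) B p
          = -jacBracket (fun q => θ * (jacBracket ψ ω q * B q)) B p :=
        jacBracket_fst_neg ((hbd.mul hBd).const_mul θ) B p
      have s2 : jacBracket (fun q => θ * (jacBracket ψ ω q * B q)) B p
          = θ * jacBracket (fun q => jacBracket ψ ω q * B q) B p :=
        jacBracket_fst_const_mul (hbd.mul hBd) θ B p
      have s3 : jacBracket (fun q => jacBracket ψ ω q * B q) B p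
          = jacBracket (jacBracket ψ ω) B p * B p + jacBracket ψ ω p * jacBracket B B p :=
        jacBracket_fst_mul hbd hBd B p
      rw [s1, s2, s3, jacBracket_self]
      ring
    have e6 : jacBracket B ψ p = -jacBracket ψ B p := jacBracket_antisymm B ψ p
    have e7 : jacBracket ω ψ p = -jacBracket ψ ω p := jacBracket_antisymm ω ψ p
    rw [h0, h1, h2, e1, e2, e3, e4, e5, e6, e7]
    ring
  -- integral identity
  have hval : (∫ q in Set.Icc (0 : ℝ) 1 ×ˢ Set.Icc (0 : ℝ) 1,
        pdt (fun q => ω q * B q) (t, q.1, q.2))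
      = -(θ * ∫ q in Set.Icc (0 : ℝ) 1 ×ˢ Set.Icc (0 : ℝ) 1,
          ((jacBracket ψ B (t, q.1, q.2)) ^ 2 + (jacBracket ψ ω (t, q.1, q.2)) ^ 2)) := by
    have hint1 : IntegrableOn
        (fun q : ℝ × ℝ => (-θ) * ((jacBracket ψ B (t, q.1, q.2)) ^ 2
          + (jacBracket ψ ω (t, q.1, q.2)) ^ 2))
        (Set.Icc (0:ℝ) 1 ×ˢ Set.Icc (0:ℝ) 1) volume :=
      integrableOn_slice (w := fun p => (-θ) * ((jacBracket ψ B p) ^ 2 + (jacBracket ψ ω p) ^ 2))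
        (by have := haC.continuous; have := hbC.continuous; fun_prop) t
    have hint2 : IntegrableOn
        (fun q : ℝ × ℝ => jacBracket
          (fun q => -(ω q * B q + θ * (jacBracket ψ B q * B q)
            + θ * (jacBracket ψ ω q * ω q))) ψ (t, q.1, q.2))
        (Set.Icc (0:ℝ) 1 ×ˢ Set.Icc (0:ℝ) 1) volume :=
      integrableOn_slice (contDiff_jacBracket hEC hψ).continuous t
    have hint3 : IntegrableOn
        (fun q : ℝ × ℝ => jacBracket (fun q => -(θ * (jacBracket ψ ω q * B q))) B (t, q.1, q.2))
        (Set.Icc (0:ℝ) 1 ×ˢ Set.Icc (0:ℝ) 1) volume :=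
      integrableOn_slice (contDiff_jacBracket hEbC hB).continuous t
    calc (∫ q in Set.Icc (0 : ℝ) 1 ×ˢ Set.Icc (0 : ℝ) 1,
          pdt (fun q => ω q * B q) (t, q.1, q.2))
        = ∫ q in Set.Icc (0 : ℝ) 1 ×ˢ Set.Icc (0 : ℝ) 1,
            ((-θ) * ((jacBracket ψ B (t, q.1, q.2)) ^ 2 + (jacBracket ψ ω (t, q.1, q.2)) ^ 2)
            + (jacBracket
                (fun q => -(ω q * B q + θ * (jacBracket ψ B q * B q)
                  + θ * (jacBracket ψ ω q * ω q))) ψ (t, q.1, q.2)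
              + jacBracket (fun q => -(θ * (jacBracket ψ ω q * B q))) B (t, q.1, q.2))) := by
          congr 1
          funext q
          exact key (t, q.1, q.2)
      _ = (∫ q in Set.Icc (0 : ℝ) 1 ×ˢ Set.Icc (0 : ℝ) 1,
            (-θ) * ((jacBracket ψ B (t, q.1, q.2)) ^ 2 + (jacBracket ψ ω (t, q.1, q.2)) ^ 2))
          + ((∫ q in Set.Icc (0 : ℝ) 1 ×ˢ Set.Icc (0 : ℝ) 1,
              jacBracket
                (fun q => -(ω q * B q + θ * (jacBracket ψ B q * B q)
                  + θ * (jacBracket ψ ω q * ω q))) ψ (t, q.1, q.2))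
            + (∫ q in Set.Icc (0 : ℝ) 1 ×ˢ Set.Icc (0 : ℝ) 1,
              jacBracket (fun q => -(θ * (jacBracket ψ ω q * B q))) B (t, q.1, q.2))) := by
          have hint23 : IntegrableOn
              (fun q : ℝ × ℝ =>
                jacBracket
                  (fun q => -(ω q * B q + θ * (jacBracket ψ B q * B q)
                    + θ * (jacBracket ψ ω q * ω q))) ψ (t, q.1, q.2)
                + jacBracket (fun q => -(θ * (jacBracket ψ ω q * B q))) B (t, q.1, q.2))
              (Set.Icc (0:ℝ) 1 ×ˢ Set.Icc (0:ℝ) 1) volume := hint2.add hint3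
          rw [MeasureTheory.integral_add hint1 hint23,
            MeasureTheory.integral_add hint2 hint3]
      _ = -(θ * ∫ q in Set.Icc (0 : ℝ) 1 ×ˢ Set.Icc (0 : ℝ) 1,
            ((jacBracket ψ B (t, q.1, q.2)) ^ 2 + (jacBracket ψ ω (t, q.1, q.2)) ^ 2)) := by
          rw [integral_jacBracket_zero hEC hψ hEP hψP t,
            integral_jacBracket_zero hEbC hB hEbP hBP t,
            MeasureTheory.integral_const_mul]
          ring
  have H := hasDerivAt_integral_cube (w := fun q => ω q * B q) (hωC.mul hB) t
  rw [hval] at H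
  exact H
end
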